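/- Automated judge conviction: with Buyer = (x)( tell (send(x) ↠ pay(x)). fuse_x pay(x). CheckOut ), CheckOut = τ.NoPay + τ.tell paid(x).( τ.tell dispute(x) + ask sent(x) ), Seller = (y)( tell (pay(y) ↠ send(y)). fuse_y send(y). Ship ), Ship = τ.NoSend + τ.tell sent(y).( τ.tell dispute(y) + ask paid(y) ), and Judge = (z)( join_z (pay(z) ∧ dispute(z)). check ¬paid(z). jailBuyer(z) | join_z (send(z) ∧ dispute(z)). check ¬sent(z). jailSeller(z) ), there is a sequence of ↣-reductions Buyer | Seller | Judge ↣* (n)( jailSeller(n) | R ) for some process R; in it the Buyer pays and opens a dispute, the Seller chooses NoSend, and the Judge joins the session n and convicts the Seller. -/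

import Mathlib

namespace Contracts

/-! ### Names, variables, substitutions -/

abbrev Name : Type := ℕ
abbrev Var : Type := ℕ
/-- Atoms: either names (`inl`) or variables (`inr`). -/
abbrev Atom : Type := Name ⊕ Var

/-- A substitution maps variables to atoms (names or variables). -/
abbrev Subst : Type := Var → Atom

def substAtom (σ : Subst) : Atom → Atom
  | .inl n => .inl n
  | .inr x => σ x

/-- The fusion `{x̄ → n}` replacing each variable in `V` by the name `n`. -/
def fuseSubst (V : Finset Var) (n : Name) : Subst := fun y =>
  if y ∈ V then .inl n else .inr y

/-- The substitution `{n/x}`. -/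
def singleSubst (x : Var) (n : Name) : Subst := fun y =>
  if y = x then .inl n else .inr y

/-- Transposition of two atoms (for alpha conversion). -/
def swapAtom (a b : Atom) : Atom → Atom := fun c =>
  if c = a then b else if c = b then a else c

/-! ### Constraint systems (Def 2.1), with substitution/renaming/free-atom structure -/

structure ConstraintSystem where
  D : Type
  bot : D
  entails : Set D → D → Prop
  subst : Subst → D → D
  ren : (Atom → Atom) → D → D
  fv : D → Set Atom

namespace ConstraintSystem

/-- The laws (i)-(iii) of Def 2.1. -/
def Lawful (CS : ConstraintSystem) : Prop :=
  (∀ (C : Set CS.D) (c : CS.D), c ∈ C → CS.entails C c) ∧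
  (∀ (C C' : Set CS.D) (c : CS.D),
      (∀ c' ∈ C', CS.entails C c') → CS.entails C' c → CS.entails C c) ∧
  (∀ (C : Set CS.D) (c : CS.D), CS.entails C CS.bot → CS.entails C c)

def substSet (CS : ConstraintSystem) (σ : Subst) (C : Set CS.D) : Set CS.D :=
  CS.subst σ '' C

/-- Minimal fusion (Def 2.4): `C ⊢min_{ {V→n} } c`. -/
def MinFusion (CS : ConstraintSystem) (C : Set CS.D) (V : Finset Var) (n : Name)
    (c : CS.D) : Prop :=
  CS.entails (CS.substSet (fuseSubst V n) C) (CS.subst (fuseSubst V n) c) ∧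
  ∀ W : Finset Var, W ⊂ V →
    ¬ CS.entails (CS.substSet (fuseSubst W n) C) (CS.subst (fuseSubst W n) c)

/-- Local minimal fusion (Def 2.6): `C ⊢loc_σ c` iff `∃ C' ⊆ C, C' ⊢min_σ c`. -/
def LocMinFusion (CS : ConstraintSystem) (C : Set CS.D) (V : Finset Var) (n : Name)
    (c : CS.D) : Prop :=
  ∃ C' ⊆ C, CS.MinFusion C' V n c

end ConstraintSystem

/-! ### Process syntax -/

inductive Prefix (D : Type) : Type where
  | tau
  | tell (c : D)
  | check (c : D)
  | ask (c : D)
  | join (x : Var) (c : D)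
  | fuse (x : Var) (c : D)

/-- Processes.  Sums `Σ πᵢ.Pᵢ` are built from `nil` (the empty sum `0`), guarded
processes `act π P` (i.e. `π.P`) and binary `choice` (`+`). -/
inductive Proc (D : Type) : Type where
  | nil
  | con (c : D)
  | act (π : Prefix D) (P : Proc D)
  | choice (P Q : Proc D)
  | par (P Q : Proc D)
  | delim (a : Atom) (P : Proc D)
  | const (X : ℕ) (args : List Atom)

/-- Substitution on prefixes; note `(fuse_x c){n/x} = (join_x c){n/x} = ask (c{n/x})`. -/
def Prefix.substP (CS : ConstraintSystem) (σ : Subst) : Prefix CS.D → Prefix CS.D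
  | .tau => .tau
  | .tell c => .tell (CS.subst σ c)
  | .check c => .check (CS.subst σ c)
  | .ask c => .ask (CS.subst σ c)
  | .join x c =>
    match σ x with
    | .inl _ => .ask (CS.subst σ c)
    | .inr y => .join y (CS.subst σ c)
  | .fuse x c =>
    match σ x with
    | .inl _ => .ask (CS.subst σ c)
    | .inr y => .fuse y (CS.subst σ c)

/-- Mask a substitution on a bound atom. -/
def maskAtom (σ : Subst) : Atom → Subst
  | .inl _ => σ
  | .inr y => fun z => if z = y then .inr z else σ z

def Proc.subst (CS : ConstraintSystem) (σ : Subst) : Proc CS.D → Proc CS.D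
  | .nil => .nil
  | .con c => .con (CS.subst σ c)
  | .act π P => .act (π.substP CS σ) (P.subst CS σ)
  | .choice P Q => .choice (P.subst CS σ) (Q.subst CS σ)
  | .par P Q => .par (P.subst CS σ) (Q.subst CS σ)
  | .delim a P => .delim a (P.subst CS (maskAtom σ a))
  | .const X args => .const X (args.map (substAtom σ))

/-- Renaming of all atom occurrences (including binders), used for alpha conversion. -/
def Prefix.renP (CS : ConstraintSystem) (f : Atom → Atom) : Prefix CS.D → Prefix CS.D
  | .tau => .tau
  | .tell c => .tell (CS.ren f c)
  | .check c => .check (CS.ren f c)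
  | .ask c => .ask (CS.ren f c)
  | .join x c =>
    match f (.inr x) with
    | .inl _ => .ask (CS.ren f c)
    | .inr y => .join y (CS.ren f c)
  | .fuse x c =>
    match f (.inr x) with
    | .inl _ => .ask (CS.ren f c)
    | .inr y => .fuse y (CS.ren f c)

def Proc.ren (CS : ConstraintSystem) (f : Atom → Atom) : Proc CS.D → Proc CS.D
  | .nil => .nil
  | .con c => .con (CS.ren f c)
  | .act π P => .act (π.renP CS f) (P.ren CS f)
  | .choice P Q => .choice (P.ren CS f) (Q.ren CS f)
  | .par P Q => .par (P.ren CS f) (Q.ren CS f)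
  | .delim a P => .delim (f a) (P.ren CS f)
  | .const X args => .const X (args.map f)

def Prefix.fvP (CS : ConstraintSystem) : Prefix CS.D → Set Atom
  | .tau => ∅
  | .tell c => CS.fv c
  | .check c => CS.fv c
  | .ask c => CS.fv c
  | .join x c => insert (Sum.inr x) (CS.fv c)
  | .fuse x c => insert (Sum.inr x) (CS.fv c)

/-- Free atoms of a process. -/
def Proc.free (CS : ConstraintSystem) : Proc CS.D → Set Atom
  | .nil => ∅
  | .con c => CS.fv c
  | .act π P => π.fvP CS ∪ P.free CS
  | .choice P Q => P.free CS ∪ Q.free CS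
  | .par P Q => P.free CS ∪ Q.free CS
  | .delim a P => P.free CS \ {a}
  | .const _ args => {a | a ∈ args}

/-- All atoms of a process (including bound ones). -/
def Proc.atoms (CS : ConstraintSystem) : Proc CS.D → Set Atom
  | .nil => ∅
  | .con c => CS.fv c
  | .act π P => π.fvP CS ∪ P.atoms CS
  | .choice P Q => P.atoms CS ∪ Q.atoms CS
  | .par P Q => P.atoms CS ∪ Q.atoms CS
  | .delim a P => insert a (P.atoms CS)
  | .const _ args => {a | a ∈ args}

/-- Iterated delimitation `(a₁)…(aₖ)P`. -/
def delims {D : Type} (l : List Atom) (P : Proc D) : Proc D := l.foldr Proc.delim P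

/-- Parallel composition of a list of processes. -/
def parList {D : Type} (l : List (Proc D)) : Proc D := l.foldr Proc.par Proc.nil

/-- A set `C = {c₁, c₂, …}` of constraints used as a process `c₁ | c₂ | ⋯`. -/
def conList {D : Type} (C : List D) : Proc D := parList (C.map Proc.con)

/-- Environments of defining equations `X(x̄) ≐ P`. -/
abbrev Env (D : Type) : Type := ℕ → List Var × Proc D

def mkSubst (params : List Var) (args : List Atom) : Subst := fun z =>
  match params.findIdx? (fun w => w == z) with
  | some i => args.getD i (.inr z)
  | none => .inr z

def unfoldConst (CS : ConstraintSystem) (env : Env CS.D) (X : ℕ) (args : List Atom) :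
    Proc CS.D :=
  ((env X).2).subst CS (mkSubst (env X).1 args)

/-- Sums `Σ πᵢ.Pᵢ`. -/
def IsSum {D : Type} : Proc D → Prop
  | .nil => True
  | .act _ _ => True
  | .choice P Q => IsSum P ∧ IsSum Q
  | _ => False

/-- A process free from active (top-level) constraints. -/
def NoActiveCon {D : Type} : Proc D → Prop
  | .con _ => False
  | .par P Q => NoActiveCon P ∧ NoActiveCon Q
  | .delim _ P => NoActiveCon P
  | _ => True

/-- Every occurrence of a constant is guarded (behind a prefix). -/
def Guarded {D : Type} : Proc D → Prop
  | .const _ _ => False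
  | .act _ _ => True
  | .choice P Q => Guarded P ∧ Guarded Q
  | .par P Q => Guarded P ∧ Guarded Q
  | .delim _ P => Guarded P
  | _ => True

/-! ### Alpha conversion and structural equivalence -/

inductive AlphaEq (CS : ConstraintSystem) : Proc CS.D → Proc CS.D → Prop where
  | refl (P) : AlphaEq CS P P
  | symm {P Q} (h : AlphaEq CS P Q) : AlphaEq CS Q P
  | trans {P Q R} (h1 : AlphaEq CS P Q) (h2 : AlphaEq CS Q R) : AlphaEq CS P R
  | act {π P Q} (h : AlphaEq CS P Q) : AlphaEq CS (.act π P) (.act π Q)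
  | choice {P P' Q Q'} (h1 : AlphaEq CS P P') (h2 : AlphaEq CS Q Q') :
      AlphaEq CS (.choice P Q) (.choice P' Q')
  | par {P P' Q Q'} (h1 : AlphaEq CS P P') (h2 : AlphaEq CS Q Q') :
      AlphaEq CS (.par P Q) (.par P' Q')
  | delim {a P Q} (h : AlphaEq CS P Q) : AlphaEq CS (.delim a P) (.delim a Q)
  | rename {a b : Atom} {P : Proc CS.D} (h : b ∉ P.atoms CS) :
      AlphaEq CS (.delim a P) (.delim b (P.ren CS (swapAtom a b)))

/-- Structural equivalence `≡` (Sect. 2), on processes taken up to alpha-conversion. -/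
inductive StructEq (CS : ConstraintSystem) (env : Env CS.D) :
    Proc CS.D → Proc CS.D → Prop where
  | refl (P) : StructEq CS env P P
  | symm {P Q} (h : StructEq CS env P Q) : StructEq CS env Q P
  | trans {P Q R} (h1 : StructEq CS env P Q) (h2 : StructEq CS env Q R) :
      StructEq CS env P R
  | alpha {P Q} (h : AlphaEq CS P Q) : StructEq CS env P Q
  | parNil (P) : StructEq CS env (.par P .nil) P
  | parComm (P Q) : StructEq CS env (.par P Q) (.par Q P)
  | parAssoc (P Q R) : StructEq CS env (.par (.par P Q) R) (.par P (.par Q R))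
  | choiceNil (P) : StructEq CS env (.choice P .nil) P
  | choiceComm (P Q) : StructEq CS env (.choice P Q) (.choice Q P)
  | choiceAssoc (P Q R) :
      StructEq CS env (.choice (.choice P Q) R) (.choice P (.choice Q R))
  | scope {a : Atom} {P Q : Proc CS.D} (h : a ∉ P.free CS) :
      StructEq CS env (.delim a (.par P Q)) (.par P (.delim a Q))
  | delimSwap (a b : Atom) (P) :
      StructEq CS env (.delim a (.delim b P)) (.delim b (.delim a P))
  | unfold (X : ℕ) (args : List Atom) :
      StructEq CS env (.const X args) (unfoldConst CS env X args)
  | actCong {π P Q} (h : StructEq CS env P Q) :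
      StructEq CS env (.act π P) (.act π Q)
  | choiceCong {P P' Q Q'} (h1 : StructEq CS env P P') (h2 : StructEq CS env Q Q') :
      StructEq CS env (.choice P Q) (.choice P' Q')
  | parCong {P P' Q Q'} (h1 : StructEq CS env P P') (h2 : StructEq CS env Q Q') :
      StructEq CS env (.par P Q) (.par P' Q')
  | delimCong {a P Q} (h : StructEq CS env P Q) :
      StructEq CS env (.delim a P) (.delim a Q)

/-! ### Reduction semantics (Fig. 1) -/

inductive Red (CS : ConstraintSystem) (env : Env CS.D) : Proc CS.D → Proc CS.D → Prop where
  | tauR (as : List Atom) (P Q R : Proc CS.D) :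
      Red CS env (delims as (.par (.choice (.act .tau P) Q) R)) (delims as (.par P R))
  | tellR (as : List Atom) (c : CS.D) (P Q R : Proc CS.D) :
      Red CS env (delims as (.par (.choice (.act (.tell c) P) Q) R))
        (delims as (.par (.con c) (.par P R)))
  | askR (as : List Atom) (C : List CS.D) (c : CS.D) (P Q R : Proc CS.D)
      (h : CS.entails {d | d ∈ C} c) :
      Red CS env (delims as (.par (conList C) (.par (.choice (.act (.ask c) P) Q) R)))
        (delims as (.par (conList C) (.par P R)))
  | checkR (as : List Atom) (C : List CS.D) (c : CS.D) (P Q R : Proc CS.D)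
      (h1 : ¬ CS.entails (insert c {d | d ∈ C}) CS.bot) (h2 : NoActiveCon R) :
      Red CS env (delims as (.par (conList C) (.par (.choice (.act (.check c) P) Q) R)))
        (delims as (.par (conList C) (.par P R)))
  | fuseR (as : List Atom) (vs : Finset Var) (x : Var) (n : Name) (C : List CS.D)
      (c : CS.D) (P Q R : Proc CS.D) (hx : x ∈ vs)
      (hfresh : (Sum.inl n : Atom) ∉ P.free CS ∧ (Sum.inl n : Atom) ∉ Q.free CS ∧
        (Sum.inl n : Atom) ∉ R.free CS ∧ (∀ d ∈ C, (Sum.inl n : Atom) ∉ CS.fv d) ∧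
        (Sum.inl n : Atom) ∉ CS.fv c ∧ (Sum.inl n : Atom) ∉ as)
      (hmin : CS.MinFusion {d | d ∈ C} vs n c) :
      Red CS env
        (delims (vs.toList.map (Sum.inr : Var → Atom) ++ as)
          (.par (conList C) (.par (.choice (.act (.fuse x c) P) Q) R)))
        (delims (Sum.inl n :: as)
          ((Proc.par (conList C) (.par P R)).subst CS (fuseSubst vs n)))
  | joinR (as : List Atom) (x : Var) (n : Name) (C : List CS.D) (c : CS.D)
      (P Q R : Proc CS.D)
      (h : CS.entails (CS.substSet (singleSubst x n) {d | d ∈ C})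
             (CS.subst (singleSubst x n) c)) :
      Red CS env
        (delims (Sum.inr x :: Sum.inl n :: as)
          (.par (conList C) (.par (.choice (.act (.join x c) P) Q) R)))
        (delims (Sum.inl n :: as)
          ((Proc.par (conList C) (.par P R)).subst CS (singleSubst x n)))
  | structR {P P' Q Q' : Proc CS.D} (h1 : StructEq CS env P P')
      (h2 : Red CS env P' Q') (h3 : StructEq CS env Q' Q) : Red CS env P Q

/-! ### Actions and the labelled transition semantics (Fig. 2) -/

inductive BAct (D : Type) where
  | tau
  | constr (C : Set D)
  | askA (C : Set D) (c : D)
  | fuseA (C : Set D) (x : Var) (c : D)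
  | joinA (C : Set D) (x : Var) (c : D)
  | checkA (C : Set D)

/-- Actions `α ::= (ā) β` where `β` is a base action; the order of the
delimitations `(ā)` is neglected, as in the paper. -/
structure Act (D : Type) where
  binders : Finset Atom
  base : BAct D

def setFv (CS : ConstraintSystem) (C : Set CS.D) : Set Atom := ⋃ d ∈ C, CS.fv d

def BAct.fa (CS : ConstraintSystem) : BAct CS.D → Set Atom
  | .tau => ∅
  | .constr C => setFv CS C
  | .askA C c => setFv CS C ∪ CS.fv c
  | .fuseA C x c => setFv CS C ∪ CS.fv c ∪ {Sum.inr x}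
  | .joinA C x c => setFv CS C ∪ CS.fv c ∪ {Sum.inr x}
  | .checkA C => setFv CS C

def Act.fa (CS : ConstraintSystem) (α : Act CS.D) : Set Atom :=
  α.base.fa CS ∪ ↑α.binders

/-- No-capture side condition of the `Par*` rules: `ā` is fresh in `b̄`, the
tentative base action and `Q'`, while `b̄` is fresh in `C` and `P'`. -/
def SideCond (CS : ConstraintSystem) (A B : Finset Atom) (C : Set CS.D)
    (β : BAct CS.D) (P' Q' : Proc CS.D) : Prop :=
  (∀ a ∈ A, a ∉ B ∧ a ∉ β.fa CS ∧ a ∉ Q'.free CS) ∧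
  (∀ b ∈ B, b ∉ setFv CS C ∧ b ∉ P'.free CS)

inductive LTS (CS : ConstraintSystem) (env : Env CS.D) :
    Proc CS.D → Act CS.D → Proc CS.D → Prop where
  | tauA {P} : LTS CS env (.act .tau P) ⟨∅, .tau⟩ P
  | tellA {c P} : LTS CS env (.act (.tell c) P) ⟨∅, .tau⟩ (.par (.con c) P)
  | askA {c P} : LTS CS env (.act (.ask c) P) ⟨∅, .askA ∅ c⟩ P
  | checkA {c P} : LTS CS env (.act (.check c) P) ⟨∅, .checkA {c}⟩ P
  | fuseA {x c P} : LTS CS env (.act (.fuse x c) P) ⟨∅, .fuseA ∅ x c⟩ P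
  | joinA {x c P} : LTS CS env (.act (.join x c) P) ⟨∅, .joinA ∅ x c⟩ P
  | constrA {u} : LTS CS env (.con u) ⟨∅, .constr {u}⟩ (.con u)
  | idleSum {P} (h : IsSum P) : LTS CS env P ⟨∅, .constr ∅⟩ P
  | parConstr {P Q P' Q' : Proc CS.D} {A B : Finset Atom} {C C' : Set CS.D}
      (h1 : LTS CS env P ⟨A, .constr C⟩ P') (h2 : LTS CS env Q ⟨B, .constr C'⟩ Q')
      (hs : SideCond CS A B C (.constr C') P' Q') :
      LTS CS env (.par P Q) ⟨A ∪ B, .constr (C ∪ C')⟩ (.par P' Q')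
  | parAskL {P Q P' Q' A B C C' c}
      (h1 : LTS CS env P ⟨A, .constr C⟩ P') (h2 : LTS CS env Q ⟨B, .askA C' c⟩ Q')
      (hs : SideCond CS A B C (.askA C' c) P' Q') :
      LTS CS env (.par P Q) ⟨A ∪ B, .askA (C ∪ C') c⟩ (.par P' Q')
  | parAskR {P Q P' Q' A B C C' c}
      (h1 : LTS CS env P ⟨B, .askA C' c⟩ P') (h2 : LTS CS env Q ⟨A, .constr C⟩ Q')
      (hs : SideCond CS A B C (.askA C' c) Q' P') :
      LTS CS env (.par P Q) ⟨A ∪ B, .askA (C ∪ C') c⟩ (.par P' Q')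
  | parFuseL {P Q P' Q' A B C C' x c}
      (h1 : LTS CS env P ⟨A, .constr C⟩ P') (h2 : LTS CS env Q ⟨B, .fuseA C' x c⟩ Q')
      (hs : SideCond CS A B C (.fuseA C' x c) P' Q') :
      LTS CS env (.par P Q) ⟨A ∪ B, .fuseA (C ∪ C') x c⟩ (.par P' Q')
  | parFuseR {P Q P' Q' A B C C' x c}
      (h1 : LTS CS env P ⟨B, .fuseA C' x c⟩ P') (h2 : LTS CS env Q ⟨A, .constr C⟩ Q')
      (hs : SideCond CS A B C (.fuseA C' x c) Q' P') :
      LTS CS env (.par P Q) ⟨A ∪ B, .fuseA (C ∪ C') x c⟩ (.par P' Q')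
  | parJoinL {P Q P' Q' A B C C' x c}
      (h1 : LTS CS env P ⟨A, .constr C⟩ P') (h2 : LTS CS env Q ⟨B, .joinA C' x c⟩ Q')
      (hs : SideCond CS A B C (.joinA C' x c) P' Q') :
      LTS CS env (.par P Q) ⟨A ∪ B, .joinA (C ∪ C') x c⟩ (.par P' Q')
  | parJoinR {P Q P' Q' A B C C' x c}
      (h1 : LTS CS env P ⟨B, .joinA C' x c⟩ P') (h2 : LTS CS env Q ⟨A, .constr C⟩ Q')
      (hs : SideCond CS A B C (.joinA C' x c) Q' P') :
      LTS CS env (.par P Q) ⟨A ∪ B, .joinA (C ∪ C') x c⟩ (.par P' Q')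
  | parCheckL {P Q P' Q' A B C C'}
      (h1 : LTS CS env P ⟨A, .constr C⟩ P') (h2 : LTS CS env Q ⟨B, .checkA C'⟩ Q')
      (hs : SideCond CS A B C (.checkA C') P' Q') :
      LTS CS env (.par P Q) ⟨A ∪ B, .checkA (C ∪ C')⟩ (.par P' Q')
  | parCheckR {P Q P' Q' A B C C'}
      (h1 : LTS CS env P ⟨B, .checkA C'⟩ P') (h2 : LTS CS env Q ⟨A, .constr C⟩ Q')
      (hs : SideCond CS A B C (.checkA C') Q' P') :
      LTS CS env (.par P Q) ⟨A ∪ B, .checkA (C ∪ C')⟩ (.par P' Q')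
  | parTauL {P P' Q} (h : LTS CS env P ⟨∅, .tau⟩ P') :
      LTS CS env (.par P Q) ⟨∅, .tau⟩ (.par P' Q)
  | parTauR {P Q Q'} (h : LTS CS env Q ⟨∅, .tau⟩ Q') :
      LTS CS env (.par P Q) ⟨∅, .tau⟩ (.par P Q')
  | sumL {P Q α P'} (h : LTS CS env P α P') (hP : IsSum P)
      (hn : ∀ C, α.base ≠ .constr C) : LTS CS env (.choice P Q) α P'
  | sumR {P Q α Q'} (h : LTS CS env Q α Q') (hQ : IsSum Q)
      (hn : ∀ C, α.base ≠ .constr C) : LTS CS env (.choice P Q) α Q'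
  | defC {X args α P'} (h : LTS CS env (unfoldConst CS env X args) α P') :
      LTS CS env (.const X args) α P'
  | del {P α P' a} (h : LTS CS env P α P') (ha : a ∉ α.fa CS) :
      LTS CS env (.delim a P) α (.delim a P')
  | openB {P P' a} {A : Finset Atom} {β : BAct CS.D} (h : LTS CS env P ⟨A, β⟩ P') :
      LTS CS env (.delim a P) ⟨insert a A, β⟩ P'
  | closeAsk {P P'} {A : Finset Atom} {C : Set CS.D} {c}
      (h : LTS CS env P ⟨A, .askA C c⟩ P') (he : CS.entails C c) :
      LTS CS env P ⟨∅, .tau⟩ (delims A.toList P')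
  | closeFuse {P P'} {A : Finset Atom} {C : Set CS.D} {x c}
      (h : LTS CS env P ⟨A, .fuseA C x c⟩ P')
      (vs : Finset Var) (hx : x ∈ vs) (hvs : ∀ v ∈ vs, (Sum.inr v : Atom) ∈ A)
      (n : Name)
      (hfresh : (Sum.inl n : Atom) ∉ P'.free CS ∧ (Sum.inl n : Atom) ∉ setFv CS C ∧
        (Sum.inl n : Atom) ∉ CS.fv c ∧ (Sum.inl n : Atom) ∉ A)
      (hloc : CS.LocMinFusion C vs n c) :
      LTS CS env P ⟨∅, .tau⟩
        (delims (Sum.inl n :: (A \ vs.image (Sum.inr : Var → Atom)).toList)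
          (P'.subst CS (fuseSubst vs n)))
  | closeJoin {P P'} {A : Finset Atom} {C : Set CS.D} {x c} {n : Name}
      (h : LTS CS env P ⟨A, .joinA C x c⟩ P')
      (hx : (Sum.inr x : Atom) ∈ A) (hn : (Sum.inl n : Atom) ∈ A)
      (he : CS.entails (CS.substSet (singleSubst x n) C) (CS.subst (singleSubst x n) c)) :
      LTS CS env P ⟨∅, .tau⟩
        (delims ((A.erase (Sum.inr x)).toList) (P'.subst CS (singleSubst x n)))
  | alphaC {P Q α P'} (h : AlphaEq CS P Q) (h2 : LTS CS env Q α P') :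
      LTS CS env P α P'

/-- Top-level reduction `↣` ([TopTau] and [TopCheck]). -/
inductive TopRed (CS : ConstraintSystem) (env : Env CS.D) :
    Proc CS.D → Proc CS.D → Prop where
  | topTau {P P'} (h : LTS CS env P ⟨∅, .tau⟩ P') : TopRed CS env P P'
  | topCheck {P P'} {A : Finset Atom} {C : Set CS.D}
      (h : LTS CS env P ⟨A, .checkA C⟩ P') (hc : ¬ CS.entails C CS.bot) :
      TopRed CS env P (delims A.toList P')

/-- `↣`-bisimilarity. -/
def IsBisim (CS : ConstraintSystem) (env : Env CS.D)
    (R : Proc CS.D → Proc CS.D → Prop) : Prop :=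
  (∀ P Q, R P Q → R Q P) ∧
  ∀ P Q, R P Q → ∀ P', TopRed CS env P P' → ∃ Q', TopRed CS env Q Q' ∧ R P' Q'

def Bisimilar (CS : ConstraintSystem) (env : Env CS.D) (P Q : Proc CS.D) : Prop :=
  ∃ R, IsBisim CS env R ∧ R P Q

/-- Renaming of actions (used to quotient by the choice of the fresh fused name). -/
def varOfAtom (x : Var) : Atom → Var
  | .inr v => v
  | .inl _ => x

def BAct.ren (CS : ConstraintSystem) (f : Atom → Atom) : BAct CS.D → BAct CS.D
  | .tau => .tau
  | .constr C => .constr (CS.ren f '' C)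
  | .askA C c => .askA (CS.ren f '' C) (CS.ren f c)
  | .fuseA C x c => .fuseA (CS.ren f '' C) (varOfAtom x (f (.inr x))) (CS.ren f c)
  | .joinA C x c => .joinA (CS.ren f '' C) (varOfAtom x (f (.inr x))) (CS.ren f c)
  | .checkA C => .checkA (CS.ren f '' C)

def Act.ren (CS : ConstraintSystem) (f : Atom → Atom) (α : Act CS.D) : Act CS.D :=
  ⟨α.binders.image f, α.base.ren CS f⟩

end Contracts
namespace Contracts

/-! ### PCL: propositional contract logic -/

inductive PCL (A : Type) : Type where
  | atom (a : A)
  | top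
  | bot
  | and (p q : PCL A)
  | or (p q : PCL A)
  | imp (p q : PCL A)
  | cimp (p q : PCL A)    -- contractual implication ↠

namespace PCL

/-- Hilbert-style provability for PCL: intuitionistic propositional logic
extended with the axioms `⊤ ↠ ⊤`, `(p ↠ p) → p` and
`(p' → p) → (p ↠ q) → (q → q') → (p' ↠ q')`. -/
inductive Proof {A : Type} : Set (PCL A) → PCL A → Prop where
  | ax {Γ : Set (PCL A)} {p} (h : p ∈ Γ) : Proof Γ p
  | mp {Γ} {p q} (h1 : Proof Γ (imp p q)) (h2 : Proof Γ p) : Proof Γ q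
  | axK {Γ} {p q} : Proof Γ (imp p (imp q p))
  | axS {Γ} {p q r} : Proof Γ (imp (imp p (imp q r)) (imp (imp p q) (imp p r)))
  | andI {Γ} {p q} : Proof Γ (imp p (imp q (and p q)))
  | andE1 {Γ} {p q} : Proof Γ (imp (and p q) p)
  | andE2 {Γ} {p q} : Proof Γ (imp (and p q) q)
  | orI1 {Γ} {p q} : Proof Γ (imp p (or p q))
  | orI2 {Γ} {p q} : Proof Γ (imp q (or p q))
  | orE {Γ} {p q r} : Proof Γ (imp (imp p r) (imp (imp q r) (imp (or p q) r)))
  | topI {Γ} : Proof Γ top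
  | botE {Γ} {p} : Proof Γ (imp bot p)
  | cimpTop {Γ} : Proof Γ (cimp top top)
  | cimpFix {Γ} {p} : Proof Γ (imp (cimp p p) p)
  | cimpMono {Γ} {p p' q q'} :
      Proof Γ (imp (imp p' p) (imp (cimp p q) (imp (imp q q') (cimp p' q'))))

end PCL

end Contracts
namespace Contracts

/-! ### PCL formulae over predicates applied to names/variables, as a constraint system -/

def PCL.mapAtoms {A B : Type} (f : A → B) : PCL A → PCL B
  | .atom a => .atom (f a)
  | .top => .top
  | .bot => .bot
  | .and p q => .and (p.mapAtoms f) (q.mapAtoms f)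
  | .or p q => .or (p.mapAtoms f) (q.mapAtoms f)
  | .imp p q => .imp (p.mapAtoms f) (q.mapAtoms f)
  | .cimp p q => .cimp (p.mapAtoms f) (q.mapAtoms f)

/-- Atomic formulae: a predicate applied to a tuple of names/variables. -/
abbrev PAtom (Pred : Type) : Type := Pred × List Atom

/-- PCL formulae over predicates `Pred`. -/
abbrev PForm (Pred : Type) : Type := PCL (PAtom Pred)

def pclFv {Pred : Type} : PForm Pred → Set Atom
  | .atom pa => {a | a ∈ pa.2}
  | .top => ∅
  | .bot => ∅
  | .and p q => pclFv p ∪ pclFv q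
  | .or p q => pclFv p ∪ pclFv q
  | .imp p q => pclFv p ∪ pclFv q
  | .cimp p q => pclFv p ∪ pclFv q

/-- Predicates occurring in a PCL formula. -/
def pclPreds {Pred : Type} : PForm Pred → Set Pred
  | .atom pa => {pa.1}
  | .top => ∅
  | .bot => ∅
  | .and p q => pclPreds p ∪ pclPreds q
  | .or p q => pclPreds p ∪ pclPreds q
  | .imp p q => pclPreds p ∪ pclPreds q
  | .cimp p q => pclPreds p ∪ pclPreds q

/-- The constraint system whose constraints are PCL formulae over `Pred`,
with entailment given by PCL provability. -/
def pclCS (Pred : Type) : ConstraintSystem where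
  D := PForm Pred
  bot := .bot
  entails := fun C c => PCL.Proof C c
  subst := fun σ => PCL.mapAtoms (fun pa => (pa.1, pa.2.map (substAtom σ)))
  ren := fun f => PCL.mapAtoms (fun pa => (pa.1, pa.2.map f))
  fv := pclFv

/-- Predicates occurring in the constraints of a prefix. -/
def Prefix.predsP {Pred : Type} : Prefix (PForm Pred) → Set Pred
  | .tau => ∅
  | .tell c => pclPreds c
  | .check c => pclPreds c
  | .ask c => pclPreds c
  | .join _ c => pclPreds c
  | .fuse _ c => pclPreds c

/-- Predicates occurring in the constraints of a process. -/
def Proc.preds {Pred : Type} : Proc (PForm Pred) → Set Pred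
  | .nil => ∅
  | .con c => pclPreds c
  | .act π P => π.predsP ∪ P.preds
  | .choice P Q => P.preds ∪ Q.preds
  | .par P Q => P.preds ∪ Q.preds
  | .delim _ P => P.preds
  | .const _ _ => ∅

end Contracts

namespace Contracts
namespace Judge

/-- Predicates of the automated-judge example. -/
inductive JPred : Type where
  | pay
  | send
  | paid
  | sent
  | dispute

abbrev F := PForm JPred

def CS : ConstraintSystem := pclCS JPred

def payP (t : Atom) : F := .atom (JPred.pay, [t])
def sendP (t : Atom) : F := .atom (JPred.send, [t])
def paidP (t : Atom) : F := .atom (JPred.paid, [t])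
def sentP (t : Atom) : F := .atom (JPred.sent, [t])
def disputeP (t : Atom) : F := .atom (JPred.dispute, [t])

/-- Negation `¬φ` abbreviates `φ → ⊥`. -/
def neg (p : F) : F := .imp p .bot

/-- `CheckOut = τ.NoPay + τ.tell paid(x).( τ.tell dispute(x) + ask sent(x) )`
where `x` is variable 0. -/
def CheckOut (NoPay : Proc F) : Proc F :=
  .choice (.act .tau NoPay)
    (.act .tau (.act (.tell (paidP (.inr 0)))
      (.choice (.act .tau (.act (.tell (disputeP (.inr 0))) .nil))
        (.act (.ask (sentP (.inr 0))) .nil))))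

/-- `Buyer = (x)( tell (send(x) ↠ pay(x)). fuse_x pay(x). CheckOut )`. -/
def Buyer (NoPay : Proc F) : Proc F :=
  .delim (.inr 0)
    (.act (.tell (.cimp (sendP (.inr 0)) (payP (.inr 0))))
      (.act (.fuse 0 (payP (.inr 0))) (CheckOut NoPay)))

/-- `Ship = τ.NoSend + τ.tell sent(y).( τ.tell dispute(y) + ask paid(y) )`
where `y` is variable 1. -/
def Ship (NoSend : Proc F) : Proc F :=
  .choice (.act .tau NoSend)
    (.act .tau (.act (.tell (sentP (.inr 1)))
      (.choice (.act .tau (.act (.tell (disputeP (.inr 1))) .nil))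
        (.act (.ask (paidP (.inr 1))) .nil))))

/-- `Seller = (y)( tell (pay(y) ↠ send(y)). fuse_y send(y). Ship )`. -/
def Seller (NoSend : Proc F) : Proc F :=
  .delim (.inr 1)
    (.act (.tell (.cimp (payP (.inr 1)) (sendP (.inr 1))))
      (.act (.fuse 1 (sendP (.inr 1))) (Ship NoSend)))

/-- `Judge = (z)( join_z (pay(z) ∧ dispute(z)). check ¬paid(z). jailBuyer(z)
             | join_z (send(z) ∧ dispute(z)). check ¬sent(z). jailSeller(z) )`
where `z` is variable 2, and `jailBuyer(z)`, `jailSeller(z)` are arbitrary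
processes with free variable 2. -/
def JudgeP (jailBuyer jailSeller : Proc F) : Proc F :=
  .delim (.inr 2)
    (.par
      (.act (.join 2 (.and (payP (.inr 2)) (disputeP (.inr 2))))
        (.act (.check (neg (paidP (.inr 2)))) jailBuyer))
      (.act (.join 2 (.and (sendP (.inr 2)) (disputeP (.inr 2))))
        (.act (.check (neg (sentP (.inr 2)))) jailSeller)))

end Judge
end Contracts

namespace Contracts
namespace PCL

variable {A : Type}

theorem Proof.weaken {Γ Γ' : Set (PCL A)} {p : PCL A} (h : Proof Γ p) (hs : Γ ⊆ Γ') :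
    Proof Γ' p := by
  induction h with
  | ax h => exact .ax (hs h)
  | mp _ _ ih1 ih2 => exact .mp ih1 ih2
  | axK => exact .axK
  | axS => exact .axS
  | andI => exact .andI
  | andE1 => exact .andE1
  | andE2 => exact .andE2
  | orI1 => exact .orI1
  | orI2 => exact .orI2
  | orE => exact .orE
  | topI => exact .topI
  | botE => exact .botE
  | cimpTop => exact .cimpTop
  | cimpFix => exact .cimpFix
  | cimpMono => exact .cimpMono

theorem Proof.impId {Γ : Set (PCL A)} (p : PCL A) : Proof Γ (.imp p p) :=
  .mp (.mp (.axS (q := PCL.imp p p)) .axK) .axK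

theorem Proof.deduction {Γ : Set (PCL A)} {p q : PCL A}
    (h : Proof (insert p Γ) q) : Proof Γ (.imp p q) := by
  induction h with
  | ax h =>
    rcases h with h | h
    · subst h; exact Proof.impId _
    · exact .mp .axK (.ax h)
  | mp _ _ ih1 ih2 => exact .mp (.mp .axS ih1) ih2
  | axK => exact .mp .axK .axK
  | axS => exact .mp .axK .axS
  | andI => exact .mp .axK .andI
  | andE1 => exact .mp .axK .andE1
  | andE2 => exact .mp .axK .andE2
  | orI1 => exact .mp .axK .orI1
  | orI2 => exact .mp .axK .orI2
  | orE => exact .mp .axK .orE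
  | topI => exact .mp .axK .topI
  | botE => exact .mp .axK .botE
  | cimpTop => exact .mp .axK .cimpTop
  | cimpFix => exact .mp .axK .cimpFix
  | cimpMono => exact .mp .axK .cimpMono

/-- From `b ↠ a ∈ Γ` and `b ∈ Γ`, derive `a` ("fix under assumption"). -/
theorem Proof.fixStep {Γ : Set (PCL A)} {a b : PCL A}
    (h1 : PCL.cimp b a ∈ Γ) (h2 : b ∈ Γ) : Proof Γ a := by
  have hab : Proof Γ (.imp a b) := .mp .axK (.ax h2)
  have haa : Proof Γ (.cimp a a) :=
    .mp (.mp (.mp .cimpMono hab) (.ax h1)) (Proof.impId a)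
  exact .mp .cimpFix haa

/-- Handshaking: from `a ↠ b` and `b ↠ a`, derive `b`. -/
theorem Proof.handshake {Γ : Set (PCL A)} {a b : PCL A}
    (h1 : PCL.cimp a b ∈ Γ) (h2 : PCL.cimp b a ∈ Γ) : Proof Γ b := by
  have hba : Proof Γ (.imp b a) :=
    Proof.deduction (Proof.fixStep (Set.mem_insert_of_mem _ h2) (Set.mem_insert _ _))
  have hbb : Proof Γ (.cimp b b) :=
    .mp (.mp (.mp .cimpMono hba) (.ax h1)) (Proof.impId b)
  exact .mp .cimpFix hbb

/-! ### A classical (single-world) model: `p ↠ q` interpreted as `q`. -/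

def evalB (v : A → Prop) : PCL A → Prop
  | .atom a => v a
  | .top => True
  | .bot => False
  | .and p q => evalB v p ∧ evalB v q
  | .or p q => evalB v p ∨ evalB v q
  | .imp p q => evalB v p → evalB v q
  | .cimp _ q => evalB v q

theorem evalB_sound {v : A → Prop} {Γ : Set (PCL A)} {p : PCL A}
    (h : Proof Γ p) (hΓ : ∀ q ∈ Γ, evalB v q) : evalB v p := by
  induction h with
  | ax h => exact hΓ _ h
  | mp _ _ ih1 ih2 => exact ih1 ih2
  | axK => exact fun a _ => a
  | axS => exact fun f g x => f x (g x)
  | andI => exact fun a b => ⟨a, b⟩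
  | andE1 => exact fun h => h.1
  | andE2 => exact fun h => h.2
  | orI1 => exact .inl
  | orI2 => exact .inr
  | orE => exact fun f g h => h.elim f g
  | topI => exact trivial
  | botE => exact False.elim
  | cimpTop => exact trivial
  | cimpFix => exact id
  | cimpMono => exact fun _ hq hqq' => hqq' hq

/-! ### A two-world Kripke model with designated contract pairs. -/

def force (v : A → Bool → Prop) (prs : List (A × A)) : PCL A → Bool → Prop
  | .atom a, w => v a w
  | .top, _ => True
  | .bot, _ => False
  | .and p q, w => force v prs p w ∧ force v prs q w
  | .or p q, w => force v prs p w ∨ force v prs q w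
  | .imp p q, w => ∀ w', w ≤ w' → force v prs p w' → force v prs q w'
  | .cimp p q, w => force v prs q w ∨
      ∃ pr ∈ prs, (∀ w', w ≤ w' → force v prs p w' → v pr.1 w') ∧
        (∀ w', w ≤ w' → v pr.2 w' → force v prs q w')

theorem force_mono {v : A → Bool → Prop} {prs : List (A × A)}
    (hv : ∀ a, v a false → v a true) :
    ∀ (p : PCL A) {w w' : Bool}, w ≤ w' → force v prs p w → force v prs p w' := by
  intro p
  induction p with
  | atom a =>
    intro w w' hw h
    simp only [force] at *
    cases w
    · cases w'
      · exact h
      · exact hv _ h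
    · cases w'
      · exact absurd hw (by simp)
      · exact h
  | top => intro _ _ _ _; trivial
  | bot => intro _ _ _ h; exact h
  | and p q ihp ihq => intro w w' hw h; exact ⟨ihp hw h.1, ihq hw h.2⟩
  | or p q ihp ihq => intro w w' hw h; exact h.elim (fun h => .inl (ihp hw h)) (fun h => .inr (ihq hw h))
  | imp p q ihp ihq =>
    intro w w' hw h w'' hw' hp
    exact h w'' (le_trans hw hw') hp
  | cimp p q ihp ihq =>
    intro w w' hw h
    rcases h with h | ⟨pr, hpr, h1, h2⟩
    · exact .inl (ihq hw h)
    · exact .inr ⟨pr, hpr, fun w'' hw'' hp => h1 w'' (le_trans hw hw'') hp,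
        fun w'' hw'' hb => h2 w'' (le_trans hw hw'') hb⟩

theorem force_sound {v : A → Bool → Prop} {prs : List (A × A)}
    (hv : ∀ a, v a false → v a true)
    (hsep : ∀ pr ∈ prs, v pr.2 true ∧ ¬ v pr.1 true)
    {Γ : Set (PCL A)} {p : PCL A} (h : Proof Γ p)
    (hΓ : ∀ q ∈ Γ, ∀ w, force v prs q w) : ∀ w, force v prs p w := by
  induction h with
  | ax h => exact hΓ _ h
  | mp _ _ ih1 ih2 => exact fun w => ih1 w w le_rfl (ih2 w)
  | axK =>
    intro w w1 h1 hp w2 h2 _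
    exact force_mono hv _ h2 hp
  | axS =>
    intro w w1 h1 hf w2 h2 hg w3 h3 hp
    exact hf w3 (le_trans h2 h3) hp w3 le_rfl (hg w3 h3 hp)
  | andI => intro w w1 h1 hp w2 h2 hq; exact ⟨force_mono hv _ h2 hp, hq⟩
  | andE1 => intro w w1 h1 hp; exact hp.1
  | andE2 => intro w w1 h1 hp; exact hp.2
  | orI1 => intro w w1 h1 hp; exact .inl hp
  | orI2 => intro w w1 h1 hp; exact .inr hp
  | orE =>
    intro w w1 h1 hf w2 h2 hg w3 h3 hpq
    rcases hpq with hp | hq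
    · exact hf w3 (le_trans h2 h3) hp
    · exact hg w3 h3 hq
  | topI => intro w; trivial
  | botE => intro w w1 h1 hp; exact hp.elim
  | cimpTop => intro w; exact .inl trivial
  | @cimpFix p =>
    intro w w1 h1 hc
    rcases hc with hp | ⟨pr, hpr, hA, hB⟩
    · exact hp
    · have hp : force v prs p true := hB true (le_top) (hsep pr hpr).1
      exact absurd (hA true le_top hp) (hsep pr hpr).2
  | @cimpMono p p' q q' =>
    intro w w1 h1 hpp w2 h2 hc w3 h3 hqq
    rcases force_mono hv _ h3 hc with hq | ⟨pr, hpr, hA, hB⟩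
    · exact .inl (hqq w3 le_rfl hq)
    · refine .inr ⟨pr, hpr, fun w4 h4 hp' => hA w4 h4 ?_, fun w4 h4 hb =>
        hqq w4 h4 (hB w4 h4 hb)⟩
      exact hpp w4 (le_trans h2 (le_trans h3 h4)) hp'

/-- Countermodel: from two contracts `A ↠ B` and `C ↠ D` on four suitably
distinct atoms, the atom `B` is not derivable. -/
theorem not_proof_pair {a b c d : A} (hab : a ≠ b) (had : a ≠ d) (hcb : c ≠ b)
    (hcd : c ≠ d) :
    ¬ Proof ({PCL.cimp (.atom a) (.atom b), PCL.cimp (.atom c) (.atom d)} : Set (PCL A))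
      (.atom b) := by
  intro h
  have hs := force_sound (v := fun t w => w = true ∧ (t = b ∨ t = d))
    (prs := [(a, b), (c, d)])
    (by intro t ht; exact ⟨rfl, ht.2⟩)
    (by
      intro pr hpr
      simp only [List.mem_cons, List.mem_singleton, List.not_mem_nil, or_false] at hpr
      rcases hpr with rfl | rfl
      · exact ⟨⟨rfl, .inl rfl⟩, by simp [hab, had]⟩
      · exact ⟨⟨rfl, .inr rfl⟩, by simp [hcb, hcd]⟩)
    h
    (by
      intro q hq w
      simp only [Set.mem_insert_iff, Set.mem_singleton_iff] at hq
      rcases hq with rfl | rfl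
      · exact .inr ⟨(a, b), by simp, fun w' _ hp => hp, fun w' _ hb => hb⟩
      · exact .inr ⟨(c, d), by simp, fun w' _ hp => hp, fun w' _ hb => hb⟩)
  have := hs false
  simp [force] at this

end PCL
end Contracts
namespace Contracts
namespace Judge

@[simp] lemma CS_D : CS.D = F := rfl
@[simp] lemma CS_bot : CS.bot = PCL.bot := rfl
@[simp] lemma CS_entails (C : Set F) (c : F) : CS.entails C c = PCL.Proof C c := rfl
@[simp] lemma CS_subst (σ : Subst) (c : F) :
    CS.subst σ c = PCL.mapAtoms (fun pa => (pa.1, pa.2.map (substAtom σ))) c := rfl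
@[simp] lemma CS_ren (f : Atom → Atom) (c : F) :
    CS.ren f c = PCL.mapAtoms (fun pa => (pa.1, pa.2.map f)) c := rfl
@[simp] lemma CS_fv (c : F) : CS.fv c = pclFv c := rfl

/-! ### Free atoms of formulae under substitution/renaming -/

lemma pclFv_map {g : Atom → Atom} {c : F} {t : Atom}
    (h : t ∈ pclFv (PCL.mapAtoms (fun pa : PAtom JPred => (pa.1, pa.2.map g)) c)) :
    ∃ s ∈ pclFv c, t = g s := by
  induction c with
  | atom pa =>
    simp only [PCL.mapAtoms, pclFv, Set.mem_setOf_eq, List.mem_map] at h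
    rcases h with ⟨s, hs, rfl⟩
    exact ⟨s, hs, rfl⟩
  | top => simp [PCL.mapAtoms, pclFv] at h
  | bot => simp [PCL.mapAtoms, pclFv] at h
  | and p q ihp ihq =>
    rcases h with h | h
    · rcases ihp h with ⟨s, hs, rfl⟩; exact ⟨s, .inl hs, rfl⟩
    · rcases ihq h with ⟨s, hs, rfl⟩; exact ⟨s, .inr hs, rfl⟩
  | or p q ihp ihq =>
    rcases h with h | h
    · rcases ihp h with ⟨s, hs, rfl⟩; exact ⟨s, .inl hs, rfl⟩
    · rcases ihq h with ⟨s, hs, rfl⟩; exact ⟨s, .inr hs, rfl⟩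
  | imp p q ihp ihq =>
    rcases h with h | h
    · rcases ihp h with ⟨s, hs, rfl⟩; exact ⟨s, .inl hs, rfl⟩
    · rcases ihq h with ⟨s, hs, rfl⟩; exact ⟨s, .inr hs, rfl⟩
  | cimp p q ihp ihq =>
    rcases h with h | h
    · rcases ihp h with ⟨s, hs, rfl⟩; exact ⟨s, .inl hs, rfl⟩
    · rcases ihq h with ⟨s, hs, rfl⟩; exact ⟨s, .inr hs, rfl⟩

lemma mem_fv_subst {σ : Subst} {c : F} {t : Atom}
    (h : t ∈ pclFv (CS.subst σ c)) : ∃ s ∈ pclFv c, t = substAtom σ s :=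
  pclFv_map h

lemma mem_fv_ren {f : Atom → Atom} {c : F} {t : Atom}
    (h : t ∈ pclFv (CS.ren f c)) : ∃ s ∈ pclFv c, t = f s :=
  pclFv_map h

lemma pcl_subst_id {σ : Subst} {c : F}
    (h : ∀ v : Var, (Sum.inr v : Atom) ∈ pclFv c → σ v = .inr v) :
    CS.subst σ c = c := by
  induction c with
  | atom pa =>
    simp only [CS_subst, PCL.mapAtoms]
    have : pa.2.map (substAtom σ) = pa.2.map id := by
      refine List.map_congr_left fun t ht => ?_
      cases t with
      | inl m => rfl
      | inr v => exact h v ht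
    simp [this]
  | top => rfl
  | bot => rfl
  | and p q ihp ihq =>
    simp only [CS_subst, PCL.mapAtoms] at *
    rw [ihp (fun v hv => h v (.inl hv)), ihq (fun v hv => h v (.inr hv))]
  | or p q ihp ihq =>
    simp only [CS_subst, PCL.mapAtoms] at *
    rw [ihp (fun v hv => h v (.inl hv)), ihq (fun v hv => h v (.inr hv))]
  | imp p q ihp ihq =>
    simp only [CS_subst, PCL.mapAtoms] at *
    rw [ihp (fun v hv => h v (.inl hv)), ihq (fun v hv => h v (.inr hv))]
  | cimp p q ihp ihq =>
    simp only [CS_subst, PCL.mapAtoms] at *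
    rw [ihp (fun v hv => h v (.inl hv)), ihq (fun v hv => h v (.inr hv))]

/-! ### Prefix-level lemmas -/

lemma prefix_subst_id {σ : Subst} {π : Prefix F}
    (h : ∀ v : Var, (Sum.inr v : Atom) ∈ π.fvP CS → σ v = .inr v) :
    π.substP CS σ = π := by
  cases π with
  | tau => rfl
  | tell c => simpa [Prefix.substP] using pcl_subst_id (fun v hv => h v hv)
  | check c => simpa [Prefix.substP] using pcl_subst_id (fun v hv => h v hv)
  | ask c => simpa [Prefix.substP] using pcl_subst_id (fun v hv => h v hv)
  | join x c =>
    have hx : σ x = .inr x := h x (by simp [Prefix.fvP])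
    have hc : CS.subst σ c = c :=
      pcl_subst_id (fun v hv => h v (by simp [Prefix.fvP]; exact .inr hv))
    simp only [CS_subst] at hc
    simp [Prefix.substP, hx, hc]
  | fuse x c =>
    have hx : σ x = .inr x := h x (by simp [Prefix.fvP])
    have hc : CS.subst σ c = c :=
      pcl_subst_id (fun v hv => h v (by simp [Prefix.fvP]; exact .inr hv))
    simp only [CS_subst] at hc
    simp [Prefix.substP, hx, hc]

lemma mem_fvP_subst {σ : Subst} {π : Prefix F} {t : Atom}
    (h : t ∈ (π.substP CS σ).fvP CS) :
    ∃ s ∈ π.fvP CS, t = substAtom σ s ∨ t = s := by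
  cases π with
  | tau => simp [Prefix.substP, Prefix.fvP] at h
  | tell c =>
    rcases mem_fv_subst h with ⟨s, hs, rfl⟩; exact ⟨s, hs, .inl rfl⟩
  | check c =>
    rcases mem_fv_subst h with ⟨s, hs, rfl⟩; exact ⟨s, hs, .inl rfl⟩
  | ask c =>
    rcases mem_fv_subst h with ⟨s, hs, rfl⟩; exact ⟨s, hs, .inl rfl⟩
  | join x c =>
    rcases hσ : σ x with m | y
    · simp only [Prefix.substP, hσ, Prefix.fvP] at h
      rcases mem_fv_subst h with ⟨s, hs, rfl⟩
      exact ⟨s, by simp [Prefix.fvP, hs], .inl rfl⟩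
    · simp only [Prefix.substP, hσ, Prefix.fvP, Set.mem_insert_iff] at h
      rcases h with rfl | h
      · exact ⟨.inr x, by simp [Prefix.fvP], .inl (by simp [substAtom, hσ])⟩
      · rcases mem_fv_subst h with ⟨s, hs, rfl⟩
        exact ⟨s, by simp [Prefix.fvP, hs], .inl rfl⟩
  | fuse x c =>
    rcases hσ : σ x with m | y
    · simp only [Prefix.substP, hσ, Prefix.fvP] at h
      rcases mem_fv_subst h with ⟨s, hs, rfl⟩
      exact ⟨s, by simp [Prefix.fvP, hs], .inl rfl⟩
    · simp only [Prefix.substP, hσ, Prefix.fvP, Set.mem_insert_iff] at h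
      rcases h with rfl | h
      · exact ⟨.inr x, by simp [Prefix.fvP], .inl (by simp [substAtom, hσ])⟩
      · rcases mem_fv_subst h with ⟨s, hs, rfl⟩
        exact ⟨s, by simp [Prefix.fvP, hs], .inl rfl⟩

lemma mem_fvP_ren {f : Atom → Atom} {π : Prefix F} {t : Atom}
    (h : t ∈ (π.renP CS f).fvP CS) : ∃ s ∈ π.fvP CS, t = f s := by
  cases π with
  | tau => simp [Prefix.renP, Prefix.fvP] at h
  | tell c => exact mem_fv_ren h
  | check c => exact mem_fv_ren h
  | ask c => exact mem_fv_ren h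
  | join x c =>
    rcases hσ : f (.inr x) with m | y
    · simp only [Prefix.renP, hσ, Prefix.fvP] at h
      rcases mem_fv_ren h with ⟨s, hs, rfl⟩
      exact ⟨s, by simp [Prefix.fvP, hs], rfl⟩
    · simp only [Prefix.renP, hσ, Prefix.fvP, Set.mem_insert_iff] at h
      rcases h with rfl | h
      · exact ⟨.inr x, by simp [Prefix.fvP], hσ.symm⟩
      · rcases mem_fv_ren h with ⟨s, hs, rfl⟩
        exact ⟨s, by simp [Prefix.fvP, hs], rfl⟩
  | fuse x c =>
    rcases hσ : f (.inr x) with m | y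
    · simp only [Prefix.renP, hσ, Prefix.fvP] at h
      rcases mem_fv_ren h with ⟨s, hs, rfl⟩
      exact ⟨s, by simp [Prefix.fvP, hs], rfl⟩
    · simp only [Prefix.renP, hσ, Prefix.fvP, Set.mem_insert_iff] at h
      rcases h with rfl | h
      · exact ⟨.inr x, by simp [Prefix.fvP], hσ.symm⟩
      · rcases mem_fv_ren h with ⟨s, hs, rfl⟩
        exact ⟨s, by simp [Prefix.fvP, hs], rfl⟩

/-! ### Process-level lemmas -/

lemma substAtom_mask (σ : Subst) (u t : Atom) :
    substAtom (maskAtom σ u) t = t ∨ substAtom (maskAtom σ u) t = substAtom σ t := by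
  cases t with
  | inl m => exact .inl rfl
  | inr v =>
    cases u with
    | inl m => exact .inr rfl
    | inr y =>
      by_cases hv : v = y
      · subst hv; simp [maskAtom, substAtom]
      · simp [maskAtom, substAtom, hv]

lemma proc_subst_id : ∀ (P : Proc F) {σ : Subst},
    (∀ v : Var, (Sum.inr v : Atom) ∈ P.atoms CS → σ v = .inr v) →
    P.subst CS σ = P := by
  intro P
  induction P with
  | nil => intro σ h; rfl
  | con c =>
    intro σ h
    simpa [Proc.subst] using pcl_subst_id (fun v hv => h v hv)
  | act π P ih =>
    intro σ h
    simp only [Proc.subst]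
    rw [prefix_subst_id (fun v hv => h v (.inl hv)), ih (fun v hv => h v (.inr hv))]; rfl
  | choice P Q ihP ihQ =>
    intro σ h
    simp only [Proc.subst]
    rw [ihP (fun v hv => h v (.inl hv)), ihQ (fun v hv => h v (.inr hv))]; rfl
  | par P Q ihP ihQ =>
    intro σ h
    simp only [Proc.subst]
    rw [ihP (fun v hv => h v (.inl hv)), ihQ (fun v hv => h v (.inr hv))]; rfl
  | delim a P ih =>
    intro σ h
    simp only [Proc.subst]
    rw [ih]; rfl
    intro v hv
    cases a with
    | inl m => exact h v (Set.mem_insert_of_mem _ hv)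
    | inr y =>
      by_cases hvy : v = y
      · subst hvy; simp [maskAtom]
      · simp only [maskAtom, if_neg hvy]
        exact h v (Set.mem_insert_of_mem _ hv)
  | const X args =>
    intro σ h
    simp only [Proc.subst]
    have : args.map (substAtom σ) = args.map id := by
      refine List.map_congr_left fun t ht => ?_
      cases t with
      | inl m => rfl
      | inr v => exact h v ht
    simp [this]

lemma mem_atoms_subst : ∀ {P : Proc F} {σ : Subst} {t : Atom},
    t ∈ (P.subst CS σ).atoms CS → ∃ s ∈ P.atoms CS, t = s ∨ t = substAtom σ s := by
  intro P
  induction P with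
  | nil => intro σ t h; simp [Proc.subst, Proc.atoms] at h
  | con c =>
    intro σ t h
    rcases mem_fv_subst h with ⟨s, hs, rfl⟩
    exact ⟨s, hs, .inr rfl⟩
  | act π P ih =>
    intro σ t h
    rcases h with h | h
    · rcases mem_fvP_subst h with ⟨s, hs, h⟩
      exact ⟨s, .inl hs, h.symm⟩
    · rcases ih h with ⟨s, hs, h⟩
      exact ⟨s, .inr hs, h⟩
  | choice P Q ihP ihQ =>
    intro σ t h
    rcases h with h | h
    · rcases ihP h with ⟨s, hs, h⟩; exact ⟨s, .inl hs, h⟩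
    · rcases ihQ h with ⟨s, hs, h⟩; exact ⟨s, .inr hs, h⟩
  | par P Q ihP ihQ =>
    intro σ t h
    rcases h with h | h
    · rcases ihP h with ⟨s, hs, h⟩; exact ⟨s, .inl hs, h⟩
    · rcases ihQ h with ⟨s, hs, h⟩; exact ⟨s, .inr hs, h⟩
  | delim a P ih =>
    intro σ t h
    rcases h with rfl | h
    · exact ⟨t, Set.mem_insert _ _, .inl rfl⟩
    · rcases ih h with ⟨s, hs, hor⟩
      rcases hor with hor | hor
      · exact ⟨s, Set.mem_insert_of_mem _ hs, .inl hor⟩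
      · rcases substAtom_mask σ a s with hm | hm
        · rw [hor, hm]; exact ⟨s, Set.mem_insert_of_mem _ hs, .inl rfl⟩
        · rw [hor, hm]; exact ⟨s, Set.mem_insert_of_mem _ hs, .inr rfl⟩
  | const X args =>
    intro σ t h
    simp only [Proc.subst, Proc.atoms, Set.mem_setOf_eq, List.mem_map] at h
    rcases h with ⟨s, hs, rfl⟩
    exact ⟨s, hs, .inr rfl⟩

lemma mem_atoms_ren : ∀ {P : Proc F} {f : Atom → Atom} {t : Atom},
    t ∈ (P.ren CS f).atoms CS → ∃ s ∈ P.atoms CS, t = f s := by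
  intro P
  induction P with
  | nil => intro f t h; simp [Proc.ren, Proc.atoms] at h
  | con c =>
    intro f t h
    exact mem_fv_ren h
  | act π P ih =>
    intro f t h
    rcases h with h | h
    · rcases mem_fvP_ren h with ⟨s, hs, h⟩; exact ⟨s, .inl hs, h⟩
    · rcases ih h with ⟨s, hs, h⟩; exact ⟨s, .inr hs, h⟩
  | choice P Q ihP ihQ =>
    intro f t h
    rcases h with h | h
    · rcases ihP h with ⟨s, hs, h⟩; exact ⟨s, .inl hs, h⟩
    · rcases ihQ h with ⟨s, hs, h⟩; exact ⟨s, .inr hs, h⟩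
  | par P Q ihP ihQ =>
    intro f t h
    rcases h with h | h
    · rcases ihP h with ⟨s, hs, h⟩; exact ⟨s, .inl hs, h⟩
    · rcases ihQ h with ⟨s, hs, h⟩; exact ⟨s, .inr hs, h⟩
  | delim a P ih =>
    intro f t h
    rcases h with rfl | h
    · exact ⟨a, Set.mem_insert _ _, rfl⟩
    · rcases ih h with ⟨s, hs, h⟩
      exact ⟨s, Set.mem_insert_of_mem _ hs, h⟩
  | const X args =>
    intro f t h
    simp only [Proc.ren, Proc.atoms, Set.mem_setOf_eq, List.mem_map] at h
    rcases h with ⟨s, hs, rfl⟩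
    exact ⟨s, hs, rfl⟩

lemma free_subset_atoms : ∀ (P : Proc F), P.free CS ⊆ P.atoms CS := by
  intro P
  induction P with
  | nil => exact subset_rfl
  | con c => exact subset_rfl
  | act π P ih => exact Set.union_subset_union subset_rfl ih
  | choice P Q ihP ihQ => exact Set.union_subset_union ihP ihQ
  | par P Q ihP ihQ => exact Set.union_subset_union ihP ihQ
  | delim a P ih =>
    exact (Set.diff_subset).trans (ih.trans (Set.subset_insert _ _))
  | const X args => exact subset_rfl

lemma pclFv_finite (c : F) : (pclFv c).Finite := by
  induction c with
  | atom pa => exact pa.2.finite_toSet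
  | top => exact Set.finite_empty
  | bot => exact Set.finite_empty
  | and p q ihp ihq => exact ihp.union ihq
  | or p q ihp ihq => exact ihp.union ihq
  | imp p q ihp ihq => exact ihp.union ihq
  | cimp p q ihp ihq => exact ihp.union ihq

lemma fvP_finite (π : Prefix F) : (π.fvP CS).Finite := by
  cases π with
  | tau => exact Set.finite_empty
  | tell c => exact pclFv_finite c
  | check c => exact pclFv_finite c
  | ask c => exact pclFv_finite c
  | join x c => exact (pclFv_finite c).insert _
  | fuse x c => exact (pclFv_finite c).insert _

lemma atoms_finite : ∀ (P : Proc F), (P.atoms CS).Finite := by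
  intro P
  induction P with
  | nil => exact Set.finite_empty
  | con c => exact pclFv_finite c
  | act π P ih => exact (fvP_finite π).union ih
  | choice P Q ihP ihQ => exact ihP.union ihQ
  | par P Q ihP ihQ => exact ihP.union ihQ
  | delim a P ih => exact ih.insert _
  | const X args => exact args.finite_toSet

lemma exists_freshBound (Ps : List (Proc F)) :
    ∃ M : ℕ, ∀ k, M ≤ k → ∀ P ∈ Ps, (Sum.inl k : Atom) ∉ P.atoms CS ∧
      (Sum.inr k : Atom) ∉ P.atoms CS := by
  have hS : (⋃ P ∈ Ps, P.atoms CS).Finite :=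
    Set.Finite.biUnion (List.finite_toSet Ps) (fun P _ => atoms_finite P)
  have hI : ((Sum.elim id id : Atom → ℕ) '' (⋃ P ∈ Ps, P.atoms CS)).Finite :=
    hS.image _
  obtain ⟨B, hB⟩ := hI.bddAbove
  refine ⟨B + 1, fun k hk P hP => ?_⟩
  constructor
  · intro hmem
    have : k ∈ (Sum.elim id id : Atom → ℕ) '' (⋃ P ∈ Ps, P.atoms CS) :=
      ⟨Sum.inl k, Set.mem_biUnion hP hmem, rfl⟩
    have := hB this
    omega
  · intro hmem
    have : k ∈ (Sum.elim id id : Atom → ℕ) '' (⋃ P ∈ Ps, P.atoms CS) :=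
      ⟨Sum.inr k, Set.mem_biUnion hP hmem, rfl⟩
    have := hB this
    omega

end Judge
end Contracts
namespace Contracts
namespace Judge

lemma atom_swap_subst {a b : Var} (n : Name) (t : Atom) (ht : t ≠ .inr b) :
    substAtom (singleSubst b n) (swapAtom (.inr a) (.inr b) t) =
      substAtom (singleSubst a n) t := by
  cases t with
  | inl m => simp [swapAtom, substAtom]
  | inr v =>
    by_cases hva : v = a
    · subst hva
      simp [swapAtom, substAtom, singleSubst]
    · have hvb : v ≠ b := fun h => ht (by rw [h])
      simp [swapAtom, substAtom, singleSubst, hva, hvb]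

lemma fren_subst {a b : Var} {n : Name} {c : F}
    (hb : (Sum.inr b : Atom) ∉ pclFv c) :
    CS.subst (singleSubst b n) (CS.ren (swapAtom (.inr a) (.inr b)) c) =
      CS.subst (singleSubst a n) c := by
  induction c with
  | atom pa =>
    simp only [CS_subst, CS_ren, PCL.mapAtoms]
    congr 2
    rw [List.map_map]
    refine List.map_congr_left fun t ht => ?_
    exact atom_swap_subst n t (fun h => hb (h ▸ ht))
  | top => rfl
  | bot => rfl
  | and p q ihp ihq =>
    simp only [CS_subst, CS_ren, PCL.mapAtoms] at *
    rw [ihp (fun h => hb (.inl h)), ihq (fun h => hb (.inr h))]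
  | or p q ihp ihq =>
    simp only [CS_subst, CS_ren, PCL.mapAtoms] at *
    rw [ihp (fun h => hb (.inl h)), ihq (fun h => hb (.inr h))]
  | imp p q ihp ihq =>
    simp only [CS_subst, CS_ren, PCL.mapAtoms] at *
    rw [ihp (fun h => hb (.inl h)), ihq (fun h => hb (.inr h))]
  | cimp p q ihp ihq =>
    simp only [CS_subst, CS_ren, PCL.mapAtoms] at *
    rw [ihp (fun h => hb (.inl h)), ihq (fun h => hb (.inr h))]

lemma pren_subst {a b : Var} {n : Name} {π : Prefix F} (hab : a ≠ b)
    (hb : (Sum.inr b : Atom) ∉ π.fvP CS) :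
    (π.renP CS (swapAtom (.inr a) (.inr b))).substP CS (singleSubst b n) =
      π.substP CS (singleSubst a n) := by
  cases π with
  | tau => rfl
  | tell c => simp only [Prefix.renP, Prefix.substP]; rw [fren_subst hb]
  | check c => simp only [Prefix.renP, Prefix.substP]; rw [fren_subst hb]
  | ask c => simp only [Prefix.renP, Prefix.substP]; rw [fren_subst hb]
  | join x c =>
    have hbc : (Sum.inr b : Atom) ∉ pclFv c := fun h => hb (by simp [Prefix.fvP, h])
    have hxb : x ≠ b := by
      intro h; exact hb (by simp [Prefix.fvP, h])
    by_cases hxa : x = a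
    · subst hxa
      have h1 : swapAtom (.inr x) (.inr b) (.inr x) = .inr b := by simp [swapAtom]
      have h2 : singleSubst b n b = .inl n := by simp [singleSubst]
      have h3 : singleSubst x n x = .inl n := by simp [singleSubst]
      simp only [Prefix.renP, h1, Prefix.substP, h2, h3]
      rw [fren_subst hbc]
    · have h1 : swapAtom (.inr a) (.inr b) (.inr x) = .inr x := by
        simp [swapAtom, hxa, hxb]
      have h2 : singleSubst b n x = .inr x := by simp [singleSubst, hxb]
      have h3 : singleSubst a n x = .inr x := by simp [singleSubst, hxa]
      simp only [Prefix.renP, h1, Prefix.substP, h2, h3]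
      rw [fren_subst hbc]
  | fuse x c =>
    have hbc : (Sum.inr b : Atom) ∉ pclFv c := fun h => hb (by simp [Prefix.fvP, h])
    have hxb : x ≠ b := by
      intro h; exact hb (by simp [Prefix.fvP, h])
    by_cases hxa : x = a
    · subst hxa
      have h1 : swapAtom (.inr x) (.inr b) (.inr x) = .inr b := by simp [swapAtom]
      have h2 : singleSubst b n b = .inl n := by simp [singleSubst]
      have h3 : singleSubst x n x = .inl n := by simp [singleSubst]
      simp only [Prefix.renP, h1, Prefix.substP, h2, h3]
      rw [fren_subst hbc]
    · have h1 : swapAtom (.inr a) (.inr b) (.inr x) = .inr x := by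
        simp [swapAtom, hxa, hxb]
      have h2 : singleSubst b n x = .inr x := by simp [singleSubst, hxb]
      have h3 : singleSubst a n x = .inr x := by simp [singleSubst, hxa]
      simp only [Prefix.renP, h1, Prefix.substP, h2, h3]
      rw [fren_subst hbc]

lemma mask_single_self (b : Var) (n : Name) :
    maskAtom (singleSubst b n) (.inr b) = fun z => (.inr z : Atom) := by
  funext z
  by_cases hz : z = b
  · subst hz; simp [maskAtom]
  · simp [maskAtom, singleSubst, hz]

lemma mask_single_other (b v : Var) (n : Name) (hv : v ≠ b) :
    maskAtom (singleSubst b n) (.inr v) = singleSubst b n := by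
  funext z
  by_cases hz : z = v
  · subst hz; simp [maskAtom, singleSubst, hv]
  · simp [maskAtom, hz]

lemma subst_inr_id (P : Proc F) : P.subst CS (fun z => (.inr z : Atom)) = P :=
  proc_subst_id P (fun _ _ => rfl)

lemma ren_subst_alpha : ∀ (P : Proc F) (a b : Var) (n : Name), a ≠ b →
    (Sum.inr b : Atom) ∉ P.atoms CS →
    AlphaEq CS ((P.ren CS (swapAtom (.inr a) (.inr b))).subst CS (singleSubst b n))
      (P.subst CS (singleSubst a n)) := by
  intro P
  induction P with
  | nil => intro a b n hab hb; exact .refl _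
  | con c =>
    intro a b n hab hb
    simp only [Proc.ren, Proc.subst]
    rw [show Judge.CS.subst (singleSubst b n) (Judge.CS.ren (swapAtom (.inr a) (.inr b)) c)
        = Judge.CS.subst (singleSubst a n) c from fren_subst hb]
    exact .refl _
  | act π P ih =>
    intro a b n hab hb
    simp only [Proc.ren, Proc.subst]
    rw [show (π.renP CS (swapAtom (.inr a) (.inr b))).substP CS (singleSubst b n)
        = π.substP CS (singleSubst a n) from pren_subst hab (fun h => hb (.inl h))]
    exact .act (ih a b n hab (fun h => hb (.inr h)))
  | choice P Q ihP ihQ =>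
    intro a b n hab hb
    exact .choice (ihP a b n hab (fun h => hb (.inl h)))
      (ihQ a b n hab (fun h => hb (.inr h)))
  | par P Q ihP ihQ =>
    intro a b n hab hb
    exact .par (ihP a b n hab (fun h => hb (.inl h)))
      (ihQ a b n hab (fun h => hb (.inr h)))
  | delim u P ih =>
    intro a b n hab hb
    have hbP : (Sum.inr b : Atom) ∉ P.atoms CS := fun h => hb (Set.mem_insert_of_mem _ h)
    have hub : u ≠ .inr b := fun h => hb (by rw [← h]; exact Set.mem_insert _ _)
    by_cases hua : u = .inr a
    · subst hua
      have h1 : swapAtom (.inr a) (.inr b) (.inr a) = .inr b := by simp [swapAtom]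
      simp only [Proc.ren, Proc.subst, h1]
      erw [mask_single_self, subst_inr_id]
      have h2 : maskAtom (singleSubst a n) (.inr a) = fun z => (.inr z : Atom) :=
        mask_single_self a n
      erw [h2, subst_inr_id]
      exact .symm (.rename hbP)
    · have h1 : swapAtom (.inr a) (.inr b) u = u := by
        simp [swapAtom, hua, hub]
      simp only [Proc.ren, Proc.subst, h1]
      cases u with
      | inl m =>
        exact .delim (ih a b n hab hbP)
      | inr v =>
        have hva : v ≠ a := fun h => hua (by rw [h])
        have hvb : v ≠ b := fun h => hub (by rw [h])
        rw [mask_single_other b v n hvb, mask_single_other a v n hva]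
        exact .delim (ih a b n hab hbP)
  | const X args =>
    intro a b n hab hb
    simp only [Proc.ren, Proc.subst]
    rw [List.map_map]
    rw [show args.map (substAtom (singleSubst b n) ∘ swapAtom (.inr a) (.inr b))
        = args.map (substAtom (singleSubst a n)) from
        List.map_congr_left fun t ht => atom_swap_subst n t (fun h => hb (h ▸ ht))]
    exact .refl _

end Judge
end Contracts
namespace Contracts
namespace Judge

/-! ### Components of the reduction trace -/

def con1 (t : Atom) : F := .cimp (sendP t) (payP t)
def con2 (t : Atom) : F := .cimp (payP t) (sendP t)

/-- The `CheckOut` continuation with session atom `t`. -/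
def CKt (np : Proc F) (t : Atom) : Proc F :=
  .choice (.act .tau np)
    (.act .tau (.act (.tell (paidP t))
      (.choice (.act .tau (.act (.tell (disputeP t)) .nil))
        (.act (.ask (sentP t)) .nil))))

/-- The `Ship` continuation with session atom `t`. -/
def SHt (ns : Proc F) (t : Atom) : Proc F :=
  .choice (.act .tau ns)
    (.act .tau (.act (.tell (sentP t))
      (.choice (.act .tau (.act (.tell (disputeP t)) .nil))
        (.act (.ask (paidP t)) .nil))))

def JN1 (jb : Proc F) (z : Var) : Proc F :=
  .act (.join z (.and (payP (.inr z)) (disputeP (.inr z))))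
    (.act (.check (neg (paidP (.inr z)))) jb)

def JN2 (js : Proc F) (z : Var) : Proc F :=
  .act (.join z (.and (sendP (.inr z)) (disputeP (.inr z))))
    (.act (.check (neg (sentP (.inr z)))) js)

def JBody (jb js : Proc F) (z : Var) : Proc F := .par (JN1 jb z) (JN2 js z)

def BuyerR (np : Proc F) (x : Var) : Proc F :=
  .delim (.inr x)
    (.act (.tell (con1 (.inr x))) (.act (.fuse x (payP (.inr x))) (CKt np (.inr x))))

def SellerR (ns : Proc F) (y : Var) : Proc F :=
  .delim (.inr y)
    (.act (.tell (con2 (.inr y))) (.act (.fuse y (sendP (.inr y))) (SHt ns (.inr y))))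

def JudgeR (jb js : Proc F) (z : Var) : Proc F := .delim (.inr z) (JBody jb js z)

lemma buyer_alpha (NoPay : Proc F) (x : Var) (hx0 : x ≠ 0)
    (hfresh : (Sum.inr x : Atom) ∉ NoPay.atoms CS) :
    AlphaEq CS (Buyer NoPay) (BuyerR (NoPay.ren CS (swapAtom (.inr 0) (.inr x))) x) := by
  have hb : (Sum.inr x : Atom) ∉
      (Proc.act (.tell (con1 (.inr 0)))
        (.act (.fuse 0 (payP (.inr 0))) (CKt NoPay (.inr 0)))).atoms CS := by
    have hne : (Sum.inr x : Atom) ≠ Sum.inr 0 := by simpa using hx0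
    simp [Proc.atoms, Prefix.fvP, CS_fv, con1, payP, sendP, paidP, sentP, disputeP,
      CKt, pclFv, hne, hfresh]
  have h := AlphaEq.rename (CS := CS) (a := .inr 0) (b := .inr x)
    (P := .act (.tell (con1 (.inr 0)))
      (.act (.fuse 0 (payP (.inr 0))) (CKt NoPay (.inr 0)))) hb
  have heq : (Proc.act (.tell (con1 (.inr 0)))
        (.act (.fuse 0 (payP (.inr 0))) (CKt NoPay (.inr 0)))).ren CS
        (swapAtom (.inr 0) (.inr x))
      = .act (.tell (con1 (.inr x)))
          (.act (.fuse x (payP (.inr x)))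
            (CKt (NoPay.ren CS (swapAtom (.inr 0) (.inr x))) (.inr x))) := by
    have hs0 : swapAtom (.inr 0) (.inr x) (.inr 0) = (.inr x : Atom) := by
      simp [swapAtom]
    simp only [Proc.ren, Prefix.renP, CS_ren, PCL.mapAtoms, con1, payP, sendP, paidP,
      sentP, disputeP, CKt, List.map_cons, List.map_nil, hs0]
    rfl
  erw [heq] at h
  have hB : Buyer NoPay = .delim (.inr 0)
      (.act (.tell (con1 (.inr 0))) (.act (.fuse 0 (payP (.inr 0))) (CKt NoPay (.inr 0)))) := rfl
  rw [hB]
  exact h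

end Judge
end Contracts

namespace Contracts
namespace Judge

lemma seller_alpha (NoSend : Proc F) (y : Var) (hy0 : y ≠ 1)
    (hfresh : (Sum.inr y : Atom) ∉ NoSend.atoms CS) :
    AlphaEq CS (Seller NoSend) (SellerR (NoSend.ren CS (swapAtom (.inr 1) (.inr y))) y) := by
  have hb : (Sum.inr y : Atom) ∉
      (Proc.act (.tell (con2 (.inr 1)))
        (.act (.fuse 1 (sendP (.inr 1))) (SHt NoSend (.inr 1)))).atoms CS := by
    have hne : (Sum.inr y : Atom) ≠ Sum.inr 1 := by simpa using hy0
    simp [Proc.atoms, Prefix.fvP, CS_fv, con2, payP, sendP, paidP, sentP, disputeP,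
      SHt, pclFv, hne, hfresh]
  have h := AlphaEq.rename (CS := CS) (a := .inr 1) (b := .inr y)
    (P := .act (.tell (con2 (.inr 1)))
      (.act (.fuse 1 (sendP (.inr 1))) (SHt NoSend (.inr 1)))) hb
  have heq : (Proc.act (.tell (con2 (.inr 1)))
        (.act (.fuse 1 (sendP (.inr 1))) (SHt NoSend (.inr 1)))).ren CS
        (swapAtom (.inr 1) (.inr y))
      = .act (.tell (con2 (.inr y)))
          (.act (.fuse y (sendP (.inr y)))
            (SHt (NoSend.ren CS (swapAtom (.inr 1) (.inr y))) (.inr y))) := by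
    have hs0 : swapAtom (.inr 1) (.inr y) (.inr 1) = (.inr y : Atom) := by
      simp [swapAtom]
    simp only [Proc.ren, Prefix.renP, CS_ren, PCL.mapAtoms, con2, payP, sendP, paidP,
      sentP, disputeP, SHt, List.map_cons, List.map_nil, hs0]
    rfl
  erw [heq] at h
  exact h

lemma judge_alpha (jailBuyer jailSeller : Proc F) (z : Var) (hz2 : z ≠ 2)
    (hfb : (Sum.inr z : Atom) ∉ jailBuyer.atoms CS)
    (hfs : (Sum.inr z : Atom) ∉ jailSeller.atoms CS) :
    AlphaEq CS (JudgeP jailBuyer jailSeller)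
      (JudgeR (jailBuyer.ren CS (swapAtom (.inr 2) (.inr z)))
        (jailSeller.ren CS (swapAtom (.inr 2) (.inr z))) z) := by
  have hb : (Sum.inr z : Atom) ∉ (JBody jailBuyer jailSeller 2).atoms CS := by
    have hne : (Sum.inr z : Atom) ≠ Sum.inr 2 := by simpa using hz2
    simp [JBody, JN1, JN2, Proc.atoms, Prefix.fvP, CS_fv, neg, payP, sendP, paidP,
      sentP, disputeP, pclFv, hne, hfb, hfs]
  have h := AlphaEq.rename (CS := CS) (a := .inr 2) (b := .inr z)
    (P := JBody jailBuyer jailSeller 2) hb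
  have heq : (JBody jailBuyer jailSeller 2).ren CS (swapAtom (.inr 2) (.inr z))
      = JBody (jailBuyer.ren CS (swapAtom (.inr 2) (.inr z)))
          (jailSeller.ren CS (swapAtom (.inr 2) (.inr z))) z := by
    have hs0 : swapAtom (.inr 2) (.inr z) (.inr 2) = (.inr z : Atom) := by
      simp [swapAtom]
    simp only [JBody, JN1, JN2, Proc.ren, Prefix.renP, CS_ren, PCL.mapAtoms, neg, payP,
      sendP, paidP, sentP, disputeP, List.map_cons, List.map_nil, hs0]
    rfl
  erw [heq] at h
  exact h

end Judge
end Contracts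
namespace Contracts
namespace Judge

def FreshIn (P : Proc F) (x y z : Var) (n : Name) : Prop :=
  (Sum.inr x : Atom) ∉ P.atoms CS ∧ (Sum.inr y : Atom) ∉ P.atoms CS ∧
  (Sum.inr z : Atom) ∉ P.atoms CS ∧ (Sum.inl n : Atom) ∉ P.atoms CS

lemma LTS_cast {env : Env F} {P : Proc F} {α α' : Act F} {P' Q' : Proc F}
    (h : LTS CS env P α P') (hα : α = α') (hP : P' = Q') : LTS CS env P α' Q' :=
  hα ▸ hP ▸ h

/-- buyer after its `tell`. -/
def St1 (np : Proc F) (x : Var) : Proc F :=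
  .delim (.inr x)
    (.par (.con (con1 (.inr x))) (.act (.fuse x (payP (.inr x))) (CKt np (.inr x))))

/-- seller after its `tell`. -/
def St2 (ns : Proc F) (y : Var) : Proc F :=
  .delim (.inr y)
    (.par (.con (con2 (.inr y))) (.act (.fuse y (sendP (.inr y))) (SHt ns (.inr y))))

lemma empty_side (C : Set F) (β : BAct F) (P' Q' : Proc F) :
    SideCond CS ∅ ∅ C β P' Q' :=
  ⟨fun a ha => absurd ha (Finset.notMem_empty a),
   fun b hb => absurd hb (Finset.notMem_empty b)⟩

lemma patom_pay_ne_send {s t : Atom} : ((JPred.pay, [s]) : PAtom JPred) ≠ (JPred.send, [t]) := by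
  intro h
  exact JPred.noConfusion (congrArg Prod.fst h)

lemma patom_send_ne_pay {s t : Atom} : ((JPred.send, [s]) : PAtom JPred) ≠ (JPred.pay, [t]) := by
  intro h
  exact JPred.noConfusion (congrArg Prod.fst h)

/-- The minimal-fusion entailment for the buyer/seller handshake. -/
lemma fuse_locmin (x y : Var) (n : Name) (hxy : x ≠ y) :
    CS.LocMinFusion ({con2 (.inr y)} ∪ {con1 (.inr x)} : Set F) {x, y} n
      (payP (.inr x)) := by
  refine ⟨_, subset_rfl, ?_, ?_⟩
  · -- entailment after the full fusion
    have hx : (fuseSubst {x, y} n) x = .inl n := by simp [fuseSubst]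
    have hy : (fuseSubst {x, y} n) y = .inl n := by simp [fuseSubst]
    have him : CS.substSet (fuseSubst {x, y} n) ({con2 (.inr y)} ∪ {con1 (.inr x)})
        = {con2 (.inl n), con1 (.inl n)} := by
      change (fun c : F => (CS.subst (fuseSubst {x, y} n) c : F)) '' ({con2 (.inr y)} ∪ {con1 (.inr x)} : Set F) = ({con2 (.inl n), con1 (.inl n)} : Set F)
      rw [Set.singleton_union, Set.image_insert_eq, Set.image_singleton]
      simp only [ConstraintSystem.substSet, Set.singleton_union, Set.image_insert_eq,
        Set.image_singleton, con1, con2, payP, sendP, CS_subst, PCL.mapAtoms,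
        List.map_cons, List.map_nil, substAtom, hx, hy]
      rfl
    have htgt : CS.subst (fuseSubst {x, y} n) (payP (.inr x)) = payP (.inl n) := by
      simp [payP, PCL.mapAtoms, substAtom, hx]
    erw [him, htgt, CS_entails]
    exact PCL.Proof.handshake (a := sendP (.inl n)) (b := payP (.inl n))
      (Or.inr rfl) (Or.inl rfl)
  · -- minimality
    intro W hW
    have hsub := hW.subset
    have hne := hW.ne
    by_cases hxW : x ∈ W <;> by_cases hyW : y ∈ W
    · exfalso
      apply hne
      refine Finset.Subset.antisymm hsub ?_
      intro v hv
      simp only [Finset.mem_insert, Finset.mem_singleton] at hv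
      rcases hv with rfl | rfl
      · exact hxW
      · exact hyW
    all_goals {
      intro hent
      have hx' : (fuseSubst W n) x = (if x ∈ W then Sum.inl n else Sum.inr x) := rfl
      have hy' : (fuseSubst W n) y = (if y ∈ W then Sum.inl n else Sum.inr y) := rfl
      simp only [hxW, hyW, if_pos, if_neg, if_true, if_false, reduceIte] at hx' hy'
      have him : CS.substSet (fuseSubst W n) ({con2 (.inr y)} ∪ {con1 (.inr x)})
          = {con2 ((fuseSubst W n) y), con1 ((fuseSubst W n) x)} := by
        change (fun c : F => (CS.subst (fuseSubst W n) c : F)) '' ({con2 (.inr y)} ∪ {con1 (.inr x)} : Set F) = ({con2 ((fuseSubst W n) y), con1 ((fuseSubst W n) x)} : Set F)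
        rw [Set.singleton_union, Set.image_insert_eq, Set.image_singleton]
        simp only [ConstraintSystem.substSet, Set.singleton_union, Set.image_insert_eq,
          Set.image_singleton, con1, con2, payP, sendP, CS_subst, PCL.mapAtoms,
          List.map_cons, List.map_nil, substAtom]
        rfl
      have htgt : CS.subst (fuseSubst W n) (payP (.inr x)) = payP ((fuseSubst W n) x) := by
        simp [payP, PCL.mapAtoms, substAtom]
      erw [him, htgt, CS_entails] at hent
      rw [hx', hy'] at hent
      erw [Set.pair_comm] at hent
      refine PCL.not_proof_pair (A := PAtom JPred) ?_ ?_ ?_ ?_ hent <;>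
        simp_all [con1, con2, payP, sendP, hxy, Ne.symm hxy]
    }

end Judge
end Contracts
namespace Contracts
namespace Judge

lemma judge_atoms {jb js : Proc F} {z : Var} {t : Atom} (htz : t ≠ .inr z)
    (hjb : t ∉ jb.atoms CS) (hjs : t ∉ js.atoms CS) :
    t ∉ (JudgeR jb js z).atoms CS := by
  simp [JudgeR, JBody, JN1, JN2, Proc.atoms, Prefix.fvP, neg, payP, sendP,
    paidP, sentP, disputeP, pclFv, htz, hjb, hjs]

lemma buyres_atoms {np : Proc F} {x : Var} {t : Atom} (htx : t ≠ .inr x)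
    (hnp : t ∉ np.atoms CS) :
    t ∉ (Proc.par (.con (con1 (.inr x))) (CKt np (.inr x))).atoms CS := by
  simp [CKt, con1, payP, sendP, paidP, sentP, disputeP, Proc.atoms, Prefix.fvP,
    pclFv, htx, hnp]

lemma selres_atoms {ns : Proc F} {y : Var} {t : Atom} (hty : t ≠ .inr y)
    (hns : t ∉ ns.atoms CS) :
    t ∉ (Proc.par (.con (con2 (.inr y)))
      (.act (.fuse y (sendP (.inr y))) (SHt ns (.inr y)))).atoms CS := by
  simp [SHt, con2, payP, sendP, paidP, sentP, disputeP, Proc.atoms, Prefix.fvP,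
    pclFv, hty, hns]

end Judge
end Contracts
namespace Contracts
namespace Judge

lemma step_fuse (env : Env F) (np ns jb js : Proc F) (x y z : Var) (n : Name)
    (hxy : x ≠ y) (hxz : x ≠ z) (hyz : y ≠ z)
    (hnp : (Sum.inr y : Atom) ∉ np.atoms CS ∧ (Sum.inl n : Atom) ∉ np.atoms CS)
    (hns : (Sum.inr x : Atom) ∉ ns.atoms CS ∧ (Sum.inl n : Atom) ∉ ns.atoms CS)
    (hjb : (Sum.inr x : Atom) ∉ jb.atoms CS ∧ (Sum.inr y : Atom) ∉ jb.atoms CS ∧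
      (Sum.inl n : Atom) ∉ jb.atoms CS)
    (hjs : (Sum.inr x : Atom) ∉ js.atoms CS ∧ (Sum.inr y : Atom) ∉ js.atoms CS ∧
      (Sum.inl n : Atom) ∉ js.atoms CS) :
    TopRed CS env (.par (St1 np x) (.par (St2 ns y) (JudgeR jb js z)))
      (.delim (.inl n)
        ((Proc.par (.par (.con (con1 (.inr x))) (CKt np (.inr x)))
            (.par (.par (.con (con2 (.inr y)))
                (.act (.fuse y (sendP (.inr y))) (SHt ns (.inr y))))
              (JudgeR jb js z))).subst CS (fuseSubst {x, y} n))) := by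
  -- buyer emits the fuse action
  have hb1 : LTS CS env
      (Proc.par (.con (con1 (.inr x))) (.act (.fuse x (payP (.inr x))) (CKt np (.inr x))))
      ⟨∅, .fuseA {con1 (.inr x)} x (payP (.inr x))⟩
      (.par (.con (con1 (.inr x))) (CKt np (.inr x))) := by
    refine LTS_cast (LTS.parFuseL LTS.constrA LTS.fuseA (empty_side _ _ _ _)) ?_ rfl
    simp
    exact Set.union_empty _
  have hb2 : LTS CS env (St1 np x)
      ⟨{Sum.inr x}, .fuseA {con1 (.inr x)} x (payP (.inr x))⟩
      (.par (.con (con1 (.inr x))) (CKt np (.inr x))) := by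
    refine LTS_cast (LTS.openB hb1) ?_ rfl
    rfl
  -- seller emits its constraint
  have hs1 : LTS CS env
      (Proc.par (.con (con2 (.inr y))) (.act (.fuse y (sendP (.inr y))) (SHt ns (.inr y))))
      ⟨∅, .constr {con2 (.inr y)}⟩
      (.par (.con (con2 (.inr y))) (.act (.fuse y (sendP (.inr y))) (SHt ns (.inr y)))) := by
    refine LTS_cast (LTS.parConstr LTS.constrA (LTS.idleSum trivial) (empty_side _ _ _ _)) ?_ rfl
    simp
    exact Set.union_empty _
  have hs2 : LTS CS env (St2 ns y)
      ⟨{Sum.inr y}, .constr {con2 (.inr y)}⟩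
      (.par (.con (con2 (.inr y))) (.act (.fuse y (sendP (.inr y))) (SHt ns (.inr y)))) := by
    refine LTS_cast (LTS.openB hs1) ?_ rfl
    rfl
  -- the judge idles
  have hj1 : LTS CS env (JBody jb js z) ⟨∅, .constr ∅⟩ (JBody jb js z) := by
    refine LTS_cast (LTS.parConstr (LTS.idleSum trivial) (LTS.idleSum trivial)
      (empty_side _ _ _ _)) ?_ rfl
    simp
    exact Set.union_empty _
  have hj2 : LTS CS env (JudgeR jb js z) ⟨∅, .constr ∅⟩ (JudgeR jb js z) :=
    LTS.del hj1 (by simp [Act.fa, BAct.fa, setFv]; exact fun _ h => h.elim)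
  -- seller and judge together
  have hsj : LTS CS env (.par (St2 ns y) (JudgeR jb js z))
      ⟨{Sum.inr y}, .constr {con2 (.inr y)}⟩
      (.par (.par (.con (con2 (.inr y))) (.act (.fuse y (sendP (.inr y))) (SHt ns (.inr y))))
        (JudgeR jb js z)) := by
    refine LTS_cast (LTS.parConstr hs2 hj2 ?_) ?_ rfl
    · constructor
      · intro a ha
        simp only [Finset.mem_singleton] at ha
        subst ha
        refine ⟨by simp, by simp [BAct.fa, setFv]; exact fun _ h => h.elim, ?_⟩
        intro hmem
        exact judge_atoms (by simp [hyz]) hjb.2.1 hjs.2.1 (free_subset_atoms _ hmem)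
      · intro b hb
        exact absurd hb (Finset.notMem_empty b)
    · simp; exact Set.union_empty _
  -- the fuse action of the whole system
  have htop : LTS CS env (.par (St1 np x) (.par (St2 ns y) (JudgeR jb js z)))
      ⟨{Sum.inr y} ∪ {Sum.inr x},
        .fuseA ({con2 (.inr y)} ∪ {con1 (.inr x)}) x (payP (.inr x))⟩
      (.par (.par (.con (con1 (.inr x))) (CKt np (.inr x)))
        (.par (.par (.con (con2 (.inr y)))
            (.act (.fuse y (sendP (.inr y))) (SHt ns (.inr y))))
          (JudgeR jb js z))) := by
    refine LTS.parFuseR hb2 hsj ?_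
    constructor
    · intro a ha
      simp only [Finset.mem_singleton] at ha
      subst ha
      refine ⟨by simp [hxy, Ne.symm hxy], ?_, ?_⟩
      · simp [BAct.fa, setFv, con1, payP, sendP, pclFv, Ne.symm hxy, hxy]
        intro c hc; subst hc; simp [pclFv, Ne.symm hxy]
      · intro hmem
        exact buyres_atoms (by simp [hxy, Ne.symm hxy]) hnp.1 (free_subset_atoms _ hmem)
    · intro b hb
      simp only [Finset.mem_singleton] at hb
      subst hb
      refine ⟨by simp [setFv, con2, payP, sendP, pclFv, hxy]; intro c hc; subst hc; simp [pclFv, hxy], ?_⟩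
      intro hmem
      have h := free_subset_atoms _ hmem
      simp only [Proc.atoms, Set.mem_union] at h
      rcases h with h | h
      · exact selres_atoms (by simp [hxy]) hns.1 h
      · exact judge_atoms (by simp [hxz]) hjb.1 hjs.1 h
  -- close the fusion
  have hclose := LTS.closeFuse htop ({x, y} : Finset Var) (by simp)
    (by
      intro v hv
      simp only [Finset.mem_insert, Finset.mem_singleton] at hv
      rcases hv with rfl | rfl <;> simp)
    n
    (by
      refine ⟨?_, ?_, ?_, ?_⟩
      · intro hmem
        have h := free_subset_atoms _ hmem
        simp only [Proc.atoms, Set.mem_union] at h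
        rcases h with h | h | h
        · exact buyres_atoms (by simp) hnp.2 h
        · exact selres_atoms (by simp) hns.2 h
        · exact judge_atoms (by simp) hjb.2.2 hjs.2.2 h
      · simp [setFv, con1, con2, payP, sendP, pclFv]
        rintro c (hc | hc) <;> subst hc <;> simp [pclFv]
      · simp [payP, pclFv]
      · simp)
    (fuse_locmin x y n hxy)
  refine TopRed.topTau (LTS_cast hclose rfl ?_)
  have hA : ({Sum.inr y} ∪ {Sum.inr x} : Finset Atom) \
      (({x, y} : Finset Var).image Sum.inr) = ∅ := by
    ext a
    simp only [Finset.mem_sdiff, Finset.mem_union, Finset.mem_singleton,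
      Finset.mem_image, Finset.mem_insert, Finset.notMem_empty, iff_false]
    rintro ⟨h1 | h1, h2⟩
    · exact h2 ⟨y, .inr rfl, h1.symm⟩
    · exact h2 ⟨x, .inl rfl, h1.symm⟩
  rw [hA, Finset.toList_empty]
  rfl

end Judge
end Contracts
namespace Contracts
namespace Judge

/-- buyer residue after paying and disputing. -/
def BUYr (t : Atom) : Proc F :=
  .par (.con (con1 t)) (.par (.con (paidP t)) (.par (.con (disputeP t)) .nil))

/-- seller residue after the fusion. -/
def SELr (ns' : Proc F) (t : Atom) : Proc F :=
  .par (.con (con2 t)) (.act (.ask (sendP t)) (SHt ns' t))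

lemma selr_atoms {ns' : Proc F} {n : Name} {t : Atom} (htn : t ≠ .inl n)
    (hns : t ∉ ns'.atoms CS) : t ∉ (SELr ns' (.inl n)).atoms CS := by
  simp [SELr, SHt, con2, payP, sendP, paidP, sentP, disputeP, Proc.atoms, Prefix.fvP,
    pclFv, htn, hns]

lemma buyr_atoms {n : Name} {t : Atom} (htn : t ≠ .inl n) :
    t ∉ (BUYr (.inl n)).atoms CS := by
  simp [BUYr, con1, payP, sendP, paidP, disputeP, Proc.atoms, pclFv, htn]

lemma step_join (env : Env F) (ns' jb' js' : Proc F) (z : Var) (n : Name)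
    (hns : (Sum.inr z : Atom) ∉ ns'.atoms CS) :
    TopRed CS env
      (.delim (.inl n) (.par (BUYr (.inl n))
        (.par (SELr ns' (.inl n)) (.delim (.inr z) (JBody jb' js' z)))))
      (.delim (.inl n)
        ((Proc.par (BUYr (.inl n)) (.par (SELr ns' (.inl n))
            (.par (JN1 jb' z) (.act (.check (neg (sentP (.inr z)))) js')))).subst CS
          (singleSubst z n))) := by
  have hzn : (Sum.inr z : Atom) ≠ .inl n := by simp
  -- the judge's second branch fires the join
  have hbody : LTS CS env (JBody jb' js' z)
      ⟨∅, .joinA ∅ z (.and (sendP (.inr z)) (disputeP (.inr z)))⟩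
      (.par (JN1 jb' z) (.act (.check (neg (sentP (.inr z)))) js')) := by
    refine LTS_cast (LTS.parJoinL (LTS.idleSum trivial) LTS.joinA (empty_side _ _ _ _)) ?_ rfl
    simp; exact Set.union_empty _
  have hJ : LTS CS env (.delim (.inr z) (JBody jb' js' z))
      ⟨{Sum.inr z}, .joinA ∅ z (.and (sendP (.inr z)) (disputeP (.inr z)))⟩
      (.par (JN1 jb' z) (.act (.check (neg (sentP (.inr z)))) js')) := by
    refine LTS_cast (LTS.openB hbody) ?_ rfl
    rfl
  have hSEL : LTS CS env (SELr ns' (.inl n)) ⟨∅, .constr {con2 (.inl n)}⟩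
      (SELr ns' (.inl n)) := by
    refine LTS_cast (LTS.parConstr LTS.constrA (LTS.idleSum trivial) (empty_side _ _ _ _)) ?_ rfl
    simp
    exact Set.union_empty _
  have hSELJ : LTS CS env (.par (SELr ns' (.inl n)) (.delim (.inr z) (JBody jb' js' z)))
      ⟨{Sum.inr z}, .joinA {con2 (.inl n)} z (.and (sendP (.inr z)) (disputeP (.inr z)))⟩
      (.par (SELr ns' (.inl n))
        (.par (JN1 jb' z) (.act (.check (neg (sentP (.inr z)))) js'))) := by
    refine LTS_cast (LTS.parJoinL hSEL hJ ?_) ?_ rfl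
    · constructor
      · intro a ha; exact absurd ha (Finset.notMem_empty a)
      · intro b hb
        simp only [Finset.mem_singleton] at hb
        subst hb
        refine ⟨by simp [setFv, con2, payP, sendP, pclFv]; intro c hc; subst hc; simp [pclFv], ?_⟩
        intro hmem
        exact selr_atoms hzn hns (free_subset_atoms _ hmem)
    · simp; exact Set.union_empty _
  have hBUY : LTS CS env (BUYr (.inl n))
      ⟨∅, .constr {con1 (.inl n), paidP (.inl n), disputeP (.inl n)}⟩ (BUYr (.inl n)) := by
    refine LTS_cast (LTS.parConstr LTS.constrA
      (LTS.parConstr LTS.constrA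
        (LTS.parConstr LTS.constrA (LTS.idleSum trivial) (empty_side _ _ _ _))
        (empty_side _ _ _ _))
      (empty_side _ _ _ _)) ?_ rfl
    have h1 : (∅ ∪ (∅ ∪ (∅ ∪ ∅)) : Finset Atom) = ∅ := by simp
    have h2 : ({con1 (.inl n)} ∪ ({paidP (.inl n)} ∪ ({disputeP (.inl n)} ∪ ∅)) : Set F)
        = {con1 (.inl n), paidP (.inl n), disputeP (.inl n)} := by
      simp only [Set.union_empty]
      ext c
      simp only [Set.mem_union, Set.mem_singleton_iff, Set.mem_insert_iff]
      try tauto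
    erw [h1, h2]; rfl
  have htop : LTS CS env
      (.par (BUYr (.inl n)) (.par (SELr ns' (.inl n)) (.delim (.inr z) (JBody jb' js' z))))
      ⟨{Sum.inr z}, .joinA ({con1 (.inl n), paidP (.inl n), disputeP (.inl n)} ∪ {con2 (.inl n)})
          z (.and (sendP (.inr z)) (disputeP (.inr z)))⟩
      (.par (BUYr (.inl n)) (.par (SELr ns' (.inl n))
        (.par (JN1 jb' z) (.act (.check (neg (sentP (.inr z)))) js')))) := by
    refine LTS_cast (LTS.parJoinL hBUY hSELJ ?_) ?_ rfl
    · constructor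
      · intro a ha; exact absurd ha (Finset.notMem_empty a)
      · intro b hb
        simp only [Finset.mem_singleton] at hb
        subst hb
        refine ⟨by simp [setFv, con1, payP, sendP, paidP, disputeP, pclFv]; rintro c (hc | hc | hc) <;> subst hc <;> simp [pclFv], ?_⟩
        intro hmem
        exact buyr_atoms hzn (free_subset_atoms _ hmem)
    · simp
  have hopen : LTS CS env
      (.delim (.inl n) (.par (BUYr (.inl n))
        (.par (SELr ns' (.inl n)) (.delim (.inr z) (JBody jb' js' z)))))
      ⟨insert (Sum.inl n) {Sum.inr z},
        .joinA ({con1 (.inl n), paidP (.inl n), disputeP (.inl n)} ∪ {con2 (.inl n)})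
          z (.and (sendP (.inr z)) (disputeP (.inr z)))⟩
      (.par (BUYr (.inl n)) (.par (SELr ns' (.inl n))
        (.par (JN1 jb' z) (.act (.check (neg (sentP (.inr z)))) js')))) :=
    LTS.openB htop
  have he : CS.entails
      (CS.substSet (singleSubst z n)
        ({con1 (.inl n), paidP (.inl n), disputeP (.inl n)} ∪ {con2 (.inl n)}))
      (CS.subst (singleSubst z n) (.and (sendP (.inr z)) (disputeP (.inr z)))) := by
    have hz : singleSubst z n z = .inl n := by simp [singleSubst]
    have him : CS.substSet (singleSubst z n)
        ({con1 (.inl n), paidP (.inl n), disputeP (.inl n)} ∪ {con2 (.inl n)})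
        = ({con1 (.inl n), paidP (.inl n), disputeP (.inl n), con2 (.inl n)} : Set F) := by
      have e1 : CS.subst (singleSubst z n) (con1 (.inl n)) = con1 (.inl n) := by
        simp [con1, payP, sendP, PCL.mapAtoms, substAtom]
      have e2 : CS.subst (singleSubst z n) (con2 (.inl n)) = con2 (.inl n) := by
        simp [con2, payP, sendP, PCL.mapAtoms, substAtom]
      have e3 : CS.subst (singleSubst z n) (paidP (.inl n)) = paidP (.inl n) := by
        simp [paidP, PCL.mapAtoms, substAtom]
      have e4 : CS.subst (singleSubst z n) (disputeP (.inl n)) = disputeP (.inl n) := by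
        simp [disputeP, PCL.mapAtoms, substAtom]
      change (fun c : F => (CS.subst (singleSubst z n) c : F)) '' (({con1 (.inl n), paidP (.inl n), disputeP (.inl n)} ∪ {con2 (.inl n)}) : Set F) = _
      simp only [ConstraintSystem.substSet, Set.union_singleton, Set.image_insert_eq,
        Set.image_singleton, e1, e2, e3, e4]
      ext (c : F)
      show (_ ∈ ({_, _, _, _} : Set F)) ↔ (_ ∈ ({_, _, _, _} : Set F))
      simp only [Set.mem_insert_iff, Set.mem_singleton_iff]
      try tauto
    have htgt : CS.subst (singleSubst z n) (PCL.and (sendP (.inr z)) (disputeP (.inr z)))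
        = PCL.and (sendP (.inl n)) (disputeP (.inl n)) := by
      simp [sendP, disputeP, PCL.mapAtoms, substAtom, hz]
    erw [him, htgt, CS_entails]
    refine PCL.Proof.mp (.mp .andI ?_) (.ax (by simp))
    exact PCL.Proof.handshake (a := payP (.inl n)) (b := sendP (.inl n))
      (by simp [con1, con2]) (by simp [con1, con2])
  have hclose := LTS.closeJoin hopen (by simp) (by simp) he
  refine TopRed.topTau (LTS_cast hclose rfl ?_)
  have hA : (insert (Sum.inl n) {Sum.inr z} : Finset Atom).erase (Sum.inr z)
      = {Sum.inl n} := by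
    ext a
    simp only [Finset.mem_erase, Finset.mem_insert, Finset.mem_singleton]
    constructor
    · rintro ⟨h1, h2 | h2⟩
      · exact h2
      · exact absurd h2 h1
    · rintro rfl
      exact ⟨by simp, .inl rfl⟩
  rw [hA, Finset.toList_singleton]
  rfl

end Judge
end Contracts
namespace Contracts
namespace Judge

def JN1a (jb2 : Proc F) (t : Atom) : Proc F :=
  .act (.ask (.and (payP t) (disputeP t))) (.act (.check (neg (paidP t))) jb2)

lemma step_check (env : Env F) (ns2 jb2 js2 : Proc F) (n : Name) :
    TopRed CS env
      (.delim (.inl n) (.par (BUYr (.inl n)) (.par (SELr ns2 (.inl n))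
        (.par (JN1a jb2 (.inl n)) (.act (.check (neg (sentP (.inl n)))) js2)))))
      (.delim (.inl n) (.par (BUYr (.inl n)) (.par (SELr ns2 (.inl n))
        (.par (JN1a jb2 (.inl n)) js2)))) := by
  have hJpar : LTS CS env (.par (JN1a jb2 (.inl n)) (.act (.check (neg (sentP (.inl n)))) js2))
      ⟨∅, .checkA {neg (sentP (.inl n))}⟩ (.par (JN1a jb2 (.inl n)) js2) := by
    refine LTS_cast (LTS.parCheckL (LTS.idleSum trivial) LTS.checkA (empty_side _ _ _ _)) ?_ rfl
    simp; exact Set.empty_union _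
  have hSEL : LTS CS env (SELr ns2 (.inl n)) ⟨∅, .constr {con2 (.inl n)}⟩
      (SELr ns2 (.inl n)) := by
    refine LTS_cast (LTS.parConstr LTS.constrA (LTS.idleSum trivial) (empty_side _ _ _ _)) ?_ rfl
    simp
    exact Set.union_empty _
  have hSJ : LTS CS env (.par (SELr ns2 (.inl n))
        (.par (JN1a jb2 (.inl n)) (.act (.check (neg (sentP (.inl n)))) js2)))
      ⟨∅, .checkA ({con2 (.inl n)} ∪ {neg (sentP (.inl n))})⟩
      (.par (SELr ns2 (.inl n)) (.par (JN1a jb2 (.inl n)) js2)) := by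
    refine LTS_cast (LTS.parCheckL hSEL hJpar (empty_side _ _ _ _)) ?_ rfl
    simp
  have hBUY : LTS CS env (BUYr (.inl n))
      ⟨∅, .constr {con1 (.inl n), paidP (.inl n), disputeP (.inl n)}⟩ (BUYr (.inl n)) := by
    refine LTS_cast (LTS.parConstr LTS.constrA
      (LTS.parConstr LTS.constrA
        (LTS.parConstr LTS.constrA (LTS.idleSum trivial) (empty_side _ _ _ _))
        (empty_side _ _ _ _))
      (empty_side _ _ _ _)) ?_ rfl
    have h1 : (∅ ∪ (∅ ∪ (∅ ∪ ∅)) : Finset Atom) = ∅ := by simp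
    have h2 : ({con1 (.inl n)} ∪ ({paidP (.inl n)} ∪ ({disputeP (.inl n)} ∪ ∅)) : Set F)
        = {con1 (.inl n), paidP (.inl n), disputeP (.inl n)} := by
      simp only [Set.union_empty]
      ext c
      simp only [Set.mem_union, Set.mem_singleton_iff, Set.mem_insert_iff]
      try tauto
    erw [h1, h2]; rfl
  have htop : LTS CS env
      (.par (BUYr (.inl n)) (.par (SELr ns2 (.inl n))
        (.par (JN1a jb2 (.inl n)) (.act (.check (neg (sentP (.inl n)))) js2))))
      ⟨∅, .checkA ({con1 (.inl n), paidP (.inl n), disputeP (.inl n)}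
          ∪ ({con2 (.inl n)} ∪ {neg (sentP (.inl n))}))⟩
      (.par (BUYr (.inl n)) (.par (SELr ns2 (.inl n)) (.par (JN1a jb2 (.inl n)) js2))) := by
    refine LTS_cast (LTS.parCheckL hBUY hSJ (empty_side _ _ _ _)) ?_ rfl
    simp
  have hopen : LTS CS env
      (.delim (.inl n) (.par (BUYr (.inl n)) (.par (SELr ns2 (.inl n))
        (.par (JN1a jb2 (.inl n)) (.act (.check (neg (sentP (.inl n)))) js2)))))
      ⟨insert (Sum.inl n) ∅, .checkA ({con1 (.inl n), paidP (.inl n), disputeP (.inl n)}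
          ∪ ({con2 (.inl n)} ∪ {neg (sentP (.inl n))}))⟩
      (.par (BUYr (.inl n)) (.par (SELr ns2 (.inl n)) (.par (JN1a jb2 (.inl n)) js2))) :=
    LTS.openB htop
  have hc : ¬ CS.entails ({con1 (.inl n), paidP (.inl n), disputeP (.inl n)}
      ∪ ({con2 (.inl n)} ∪ {neg (sentP (.inl n))})) CS.bot := by
    intro h
    erw [CS_entails, CS_bot] at h
    refine PCL.evalB_sound (v := fun pa => pa.1 ≠ JPred.sent) h ?_
    intro q hq
    change q ∈ (({_, _, _} ∪ ({_} ∪ {_})) : Set F) at hq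
    simp only [Set.mem_union, Set.mem_insert_iff, Set.mem_singleton_iff] at hq
    rcases hq with (rfl | rfl | rfl) | (rfl | rfl)
    · simp [con1, payP, sendP, PCL.evalB]
    · simp [paidP, PCL.evalB]
    · simp [disputeP, PCL.evalB]
    · simp [con2, payP, sendP, PCL.evalB]
    · simp [neg, sentP, PCL.evalB]
  have h := TopRed.topCheck hopen hc
  have hA : (insert (Sum.inl n) ∅ : Finset Atom) = {Sum.inl n} := by simp
  rw [hA, Finset.toList_singleton] at h
  exact h

end Judge
end Contracts
namespace Contracts
namespace Judge

lemma fuse_subst_eq (np ns jb js : Proc F) (x y z : Var) (n : Name)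
    (hxz : x ≠ z) (hyz : y ≠ z) :
    (Proc.par (.par (.con (con1 (.inr x))) (CKt np (.inr x)))
        (.par (.par (.con (con2 (.inr y)))
            (.act (.fuse y (sendP (.inr y))) (SHt ns (.inr y))))
          (JudgeR jb js z))).subst CS (fuseSubst {x, y} n)
    = .par (.par (.con (con1 (.inl n))) (CKt (np.subst CS (fuseSubst {x, y} n)) (.inl n)))
        (.par (.par (.con (con2 (.inl n)))
            (.act (.ask (sendP (.inl n)))
              (SHt (ns.subst CS (fuseSubst {x, y} n)) (.inl n))))
          (.delim (.inr z)
            (JBody (jb.subst CS (maskAtom (fuseSubst {x, y} n) (.inr z)))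
              (js.subst CS (maskAtom (fuseSubst {x, y} n) (.inr z))) z))) := by
  have hx : substAtom (fuseSubst {x, y} n) (.inr x) = .inl n := by
    simp [substAtom, fuseSubst]
  have hy : substAtom (fuseSubst {x, y} n) (.inr y) = .inl n := by
    simp [substAtom, fuseSubst]
  have hfy : (fuseSubst {x, y} n) y = .inl n := by simp [fuseSubst]
  have hmz : (maskAtom (fuseSubst {x, y} n) (.inr z)) z = .inr z := by simp [maskAtom]
  have hmzA : substAtom (maskAtom (fuseSubst {x, y} n) (.inr z)) (.inr z) = .inr z := by
    simp [substAtom, maskAtom]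
  simp only [Proc.subst, Prefix.substP, CS_subst, PCL.mapAtoms, CKt, SHt, JudgeR, JBody,
    JN1, JN2, con1, con2, payP, sendP, paidP, sentP, disputeP, neg, List.map_cons,
    List.map_nil, hx, hy, hfy, hmz, hmzA]
  rfl

lemma join_subst_eq (ns' jb' js' : Proc F) (z : Var) (n : Name) :
    (Proc.par (BUYr (.inl n)) (.par (SELr ns' (.inl n))
        (.par (JN1 jb' z) (.act (.check (neg (sentP (.inr z)))) js')))).subst CS
      (singleSubst z n)
    = .par (BUYr (.inl n))
        (.par (SELr (ns'.subst CS (singleSubst z n)) (.inl n))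
          (.par (JN1a (jb'.subst CS (singleSubst z n)) (.inl n))
            (.act (.check (neg (sentP (.inl n)))) (js'.subst CS (singleSubst z n))))) := by
  have hz : (singleSubst z n) z = .inl n := by simp [singleSubst]
  have hzA : substAtom (singleSubst z n) (.inr z) = .inl n := by
    simp [substAtom, singleSubst]
  have hl : ∀ m : Name, substAtom (singleSubst z n) (.inl m) = .inl m := fun m => rfl
  simp only [Proc.subst, Prefix.substP, CS_subst, PCL.mapAtoms, BUYr, SELr, SHt, JN1,
    JN1a, con1, con2, payP, sendP, paidP, sentP, disputeP, neg, List.map_cons,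
    List.map_nil, hz, hzA, hl]
  rfl

end Judge
end Contracts
namespace Contracts
namespace Judge

lemma hn_tau : ∀ C : Set F, (Act.mk ∅ .tau : Act F).base ≠ .constr C := by
  intro C h
  cases h

lemma step_in_delim (env : Env F) {B B' : Proc F} (a : Atom) (REST : Proc F)
    (h : LTS CS env B ⟨∅, .tau⟩ B') :
    TopRed CS env (.delim a (.par B REST)) (.delim a (.par B' REST)) :=
  TopRed.topTau (LTS.del (LTS.parTauL h) (by simp [Act.fa, BAct.fa]))

lemma ren_swap_fresh {P : Proc F} {a b : Var} {t : Atom}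
    (h1 : t ∉ P.atoms CS) (h2 : t ≠ .inr a) (h3 : t ≠ .inr b) :
    t ∉ (P.ren CS (swapAtom (.inr a) (.inr b))).atoms CS := by
  intro h
  rcases mem_atoms_ren h with ⟨s, hs, heq⟩
  by_cases hsa : s = .inr a
  · subst hsa
    rw [show swapAtom (.inr a) (.inr b) (.inr a) = (.inr b : Atom) by simp [swapAtom]] at heq
    exact h3 heq
  · by_cases hsb : s = .inr b
    · subst hsb
      rw [show swapAtom (.inr a) (.inr b) (.inr b) = (.inr a : Atom) by
        simp only [swapAtom]; split <;> simp_all] at heq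
      exact h2 heq
    · rw [show swapAtom (.inr a) (.inr b) s = s by simp [swapAtom, hsa, hsb]] at heq
      exact h1 (heq ▸ hs)

lemma fuse_subst_fresh {P : Proc F} {σ : Subst} {t : Atom} {n : Name}
    (hσ : ∀ v, σ v = .inl n ∨ σ v = .inr v) (h1 : t ∉ P.atoms CS) (h2 : t ≠ .inl n) :
    t ∉ (P.subst CS σ).atoms CS := by
  intro h
  rcases mem_atoms_subst h with ⟨s, hs, heq | heq⟩
  · exact h1 (heq ▸ hs)
  · cases s with
    | inl m => exact h1 (heq ▸ hs)
    | inr v =>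
      rcases hσ v with hv | hv
      · exact h2 (by rw [heq]; simp [substAtom, hv])
      · refine h1 ?_
        rw [heq]
        simpa [substAtom, hv] using hs

lemma mask_fuse_prop (x y z : Var) (n : Name) :
    ∀ v, maskAtom (fuseSubst {x, y} n) (.inr z) v = .inl n ∨
      maskAtom (fuseSubst {x, y} n) (.inr z) v = .inr v := by
  intro v
  by_cases hvz : v = z
  · subst hvz; simp [maskAtom]
  · by_cases hv : v ∈ ({x, y} : Finset Var) <;> simp [maskAtom, hvz, fuseSubst, hv]

lemma fuse_prop (x y : Var) (n : Name) :
    ∀ v, fuseSubst {x, y} n v = .inl n ∨ fuseSubst {x, y} n v = .inr v := by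
  intro v
  by_cases hv : v ∈ ({x, y} : Finset Var) <;> simp [fuseSubst, hv]

lemma single_prop (z : Var) (n : Name) :
    ∀ v, singleSubst z n v = .inl n ∨ singleSubst z n v = .inr v := by
  intro v
  by_cases hv : v = z <;> simp [singleSubst, hv]

lemma mask_subst_ren_id {P : Proc F} {x y z : Var} {n : Name}
    (hx : (Sum.inr x : Atom) ∉ P.atoms CS) (hy : (Sum.inr y : Atom) ∉ P.atoms CS)
    (hz : (Sum.inr z : Atom) ∉ P.atoms CS) (hxz : x ≠ z) (hyz : y ≠ z) :
    (P.ren CS (swapAtom (.inr 2) (.inr z))).subst CS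
      (maskAtom (fuseSubst {x, y} n) (.inr z)) = P.ren CS (swapAtom (.inr 2) (.inr z)) := by
  refine proc_subst_id _ ?_
  intro v hv
  rcases mem_atoms_ren hv with ⟨s, hs, heq⟩
  by_cases hs2 : s = .inr 2
  · subst hs2
    rw [show swapAtom (.inr 2) (.inr z) (.inr 2) = (.inr z : Atom) by simp [swapAtom]] at heq
    have hvz : v = z := by simpa using heq
    subst hvz
    simp [maskAtom]
  · by_cases hsz : s = .inr z
    · exact absurd (hsz ▸ hs) hz
    · rw [show swapAtom (.inr 2) (.inr z) s = s by simp [swapAtom, hs2, hsz]] at heq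
      have hvmem : (Sum.inr v : Atom) ∈ P.atoms CS := heq ▸ hs
      have hvz : v ≠ z := fun h => hz (h ▸ hvmem)
      have hvx : v ≠ x := fun h => hx (h ▸ hvmem)
      have hvy : v ≠ y := fun h => hy (h ▸ hvmem)
      simp [maskAtom, hvz, fuseSubst, hvx, hvy]

lemma par_rot (env : Env F) (A B C D : Proc F) :
    StructEq CS env (.par A (.par B (.par C D))) (.par D (.par A (.par B C))) := by
  have h1 : StructEq CS env (.par B (.par C D)) (.par (.par B C) D) :=
    StructEq.symm (StructEq.parAssoc (CS := CS) (env := env) B C D)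
  have h2 : StructEq CS env (.par A (.par B (.par C D))) (.par A (.par (.par B C) D)) :=
    StructEq.parCong (StructEq.refl (CS := CS) (env := env) A) h1
  have h3 : StructEq CS env (.par A (.par (.par B C) D)) (.par (.par A (.par B C)) D) :=
    StructEq.symm (StructEq.parAssoc (CS := CS) (env := env) A (.par B C) D)
  have h4 : StructEq CS env (.par (.par A (.par B C)) D) (.par D (.par A (.par B C))) :=
    StructEq.parComm _ _
  exact StructEq.trans (StructEq.trans h2 h3) h4

end Judge
end Contracts
open Contracts Contracts.Judge

/-- Automated judge conviction: `Buyer | Seller | Judge` has a sequence of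
`↣`-reductions reaching `(n)( jailSeller(n) | R )` for some process `R`
(the Buyer pays and opens a dispute, the Seller chooses NoSend, and the Judge
joins the session `n` and convicts the Seller). -/
theorem judge_convicts_seller (env : Env Judge.F)
    (NoPay NoSend jailBuyer jailSeller : Proc Judge.F) :
    ∃ (n : Name) (R T : Proc Judge.F),
      Relation.ReflTransGen (TopRed Judge.CS env)
        (.par (Buyer NoPay) (.par (Seller NoSend) (JudgeP jailBuyer jailSeller))) T ∧
      StructEq Judge.CS env T
        (.delim (.inl n) (.par (jailSeller.subst Judge.CS (singleSubst 2 n)) R)) := by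
  obtain ⟨M, hM⟩ := Judge.exists_freshBound [NoPay, NoSend, jailBuyer, jailSeller]
  obtain ⟨x, hxdef⟩ : ∃ x : ℕ, x = M + 3 := ⟨M + 3, rfl⟩
  obtain ⟨y, hydef⟩ : ∃ y : ℕ, y = M + 4 := ⟨M + 4, rfl⟩
  obtain ⟨z, hzdef⟩ : ∃ z : ℕ, z = M + 5 := ⟨M + 5, rfl⟩
  obtain ⟨n, hndef⟩ : ∃ n : ℕ, n = M := ⟨M, rfl⟩
  have hMx : M ≤ x := by omega
  have hMy : M ≤ y := by omega
  have hMz : M ≤ z := by omega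
  have hMn : M ≤ n := by omega
  have hx0 : x ≠ 0 := by omega
  have hx1 : x ≠ 1 := by omega
  have hx2 : x ≠ 2 := by omega
  have hy0 : y ≠ 0 := by omega
  have hy1 : y ≠ 1 := by omega
  have hy2 : y ≠ 2 := by omega
  have hz1 : z ≠ 1 := by omega
  have hz2 : z ≠ 2 := by omega
  have h2z : (2 : ℕ) ≠ z := by omega
  have hxy : x ≠ y := by omega
  have hyx : y ≠ x := by omega
  have hxz : x ≠ z := by omega
  have hyz : y ≠ z := by omega
  have hzy : z ≠ y := by omega

  -- the renamed idle branches
  set NP : Proc F := NoPay.ren CS (swapAtom (.inr 0) (.inr x)) with hNPdef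
  set NS : Proc F := NoSend.ren CS (swapAtom (.inr 1) (.inr y)) with hNSdef
  set JB : Proc F := jailBuyer.ren CS (swapAtom (.inr 2) (.inr z)) with hJBdef
  set JS : Proc F := jailSeller.ren CS (swapAtom (.inr 2) (.inr z)) with hJSdef
  -- alpha conversion of the initial system
  have hα : AlphaEq CS
      (Proc.par (Buyer NoPay) (.par (Seller NoSend) (JudgeP jailBuyer jailSeller)))
      (.par (BuyerR NP x) (.par (SellerR NS y) (JudgeR JB JS z))) :=
    AlphaEq.par (buyer_alpha NoPay x hx0 (hM x hMx NoPay (by simp)).2)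
      (AlphaEq.par (seller_alpha NoSend y hy1 (hM y hMy NoSend (by simp)).2)
        (judge_alpha jailBuyer jailSeller z hz2
          (hM z hMz jailBuyer (by simp)).2 (hM z hMz jailSeller (by simp)).2))
  -- step 1: buyer tells its contract
  have step1 : TopRed CS env
      (Proc.par (Buyer NoPay) (.par (Seller NoSend) (JudgeP jailBuyer jailSeller)))
      (.par (St1 NP x) (.par (SellerR NS y) (JudgeR JB JS z))) :=
    TopRed.topTau (LTS.alphaC hα (LTS.parTauL
      (LTS.del LTS.tellA (by simp [Act.fa, BAct.fa]))))
  -- step 2: seller tells its contract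
  have step2 : TopRed CS env
      (Proc.par (St1 NP x) (.par (SellerR NS y) (JudgeR JB JS z)))
      (.par (St1 NP x) (.par (St2 NS y) (JudgeR JB JS z))) :=
    TopRed.topTau (LTS.parTauR (LTS.parTauL
      (LTS.del LTS.tellA (by simp [Act.fa, BAct.fa]))))
  -- freshness facts
  have hNPy : (Sum.inr y : Atom) ∉ NP.atoms CS :=
    ren_swap_fresh (hM y hMy NoPay (by simp)).2 (by simpa using hy0) (by simpa using hyx)
  have hNPn : (Sum.inl n : Atom) ∉ NP.atoms CS :=
    ren_swap_fresh (hM n hMn NoPay (by simp)).1 (by simp) (by simp)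
  have hNSx : (Sum.inr x : Atom) ∉ NS.atoms CS :=
    ren_swap_fresh (hM x hMx NoSend (by simp)).2 (by simpa using hx1) (by simpa using hxy)
  have hNSn : (Sum.inl n : Atom) ∉ NS.atoms CS :=
    ren_swap_fresh (hM n hMn NoSend (by simp)).1 (by simp) (by simp)
  have hNSz : (Sum.inr z : Atom) ∉ NS.atoms CS :=
    ren_swap_fresh (hM z hMz NoSend (by simp)).2 (by simpa using hz1) (by simpa using hzy)
  have hJBx : (Sum.inr x : Atom) ∉ JB.atoms CS :=
    ren_swap_fresh (hM x hMx jailBuyer (by simp)).2 (by simpa using hx2) (by simpa using hxz)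
  have hJBy : (Sum.inr y : Atom) ∉ JB.atoms CS :=
    ren_swap_fresh (hM y hMy jailBuyer (by simp)).2 (by simpa using hy2) (by simpa using hyz)
  have hJBn : (Sum.inl n : Atom) ∉ JB.atoms CS :=
    ren_swap_fresh (hM n hMn jailBuyer (by simp)).1 (by simp) (by simp)
  have hJSx : (Sum.inr x : Atom) ∉ JS.atoms CS :=
    ren_swap_fresh (hM x hMx jailSeller (by simp)).2 (by simpa using hx2) (by simpa using hxz)
  have hJSy : (Sum.inr y : Atom) ∉ JS.atoms CS :=
    ren_swap_fresh (hM y hMy jailSeller (by simp)).2 (by simpa using hy2) (by simpa using hyz)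
  have hJSn : (Sum.inl n : Atom) ∉ JS.atoms CS :=
    ren_swap_fresh (hM n hMn jailSeller (by simp)).1 (by simp) (by simp)
  -- step 3: the fusion
  have step3' := step_fuse env NP NS JB JS x y z n hxy hxz hyz
    ⟨hNPy, hNPn⟩ ⟨hNSx, hNSn⟩ ⟨hJBx, hJBy, hJBn⟩ ⟨hJSx, hJSy, hJSn⟩
  rw [fuse_subst_eq NP NS JB JS x y z n hxz hyz] at step3'
  -- the judge's continuations are unaffected by the fusion
  have eJB : JB.subst CS (maskAtom (fuseSubst {x, y} n) (.inr z)) = JB := by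
    rw [hJBdef]
    exact mask_subst_ren_id (hM x hMx jailBuyer (by simp)).2
      (hM y hMy jailBuyer (by simp)).2 (hM z hMz jailBuyer (by simp)).2 hxz hyz
  have eJS : JS.subst CS (maskAtom (fuseSubst {x, y} n) (.inr z)) = JS := by
    rw [hJSdef]
    exact mask_subst_ren_id (hM x hMx jailSeller (by simp)).2
      (hM y hMy jailSeller (by simp)).2 (hM z hMz jailSeller (by simp)).2 hxz hyz
  rw [eJB, eJS] at step3'
  set NPn : Proc F := NP.subst CS (fuseSubst {x, y} n) with hNPndef
  set NSn : Proc F := NS.subst CS (fuseSubst {x, y} n) with hNSndef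
  -- steps 4-7: the buyer pays and opens a dispute
  have step4 : TopRed CS env
      (Proc.delim (.inl n) (.par (.par (.con (con1 (.inl n))) (CKt NPn (.inl n)))
        (.par (SELr NSn (.inl n)) (.delim (.inr z) (JBody JB JS z)))))
      (.delim (.inl n) (.par (.par (.con (con1 (.inl n)))
          (.act (.tell (paidP (.inl n)))
            (.choice (.act .tau (.act (.tell (disputeP (.inl n))) .nil))
              (.act (.ask (sentP (.inl n))) .nil))))
        (.par (SELr NSn (.inl n)) (.delim (.inr z) (JBody JB JS z))))) :=
    step_in_delim env _ _ (LTS.parTauR (LTS.sumR LTS.tauA trivial hn_tau))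
  have step5 : TopRed CS env
      (Proc.delim (.inl n) (.par (.par (.con (con1 (.inl n)))
          (.act (.tell (paidP (.inl n)))
            (.choice (.act .tau (.act (.tell (disputeP (.inl n))) .nil))
              (.act (.ask (sentP (.inl n))) .nil))))
        (.par (SELr NSn (.inl n)) (.delim (.inr z) (JBody JB JS z)))))
      (.delim (.inl n) (.par (.par (.con (con1 (.inl n)))
          (.par (.con (paidP (.inl n)))
            (.choice (.act .tau (.act (.tell (disputeP (.inl n))) .nil))
              (.act (.ask (sentP (.inl n))) .nil))))
        (.par (SELr NSn (.inl n)) (.delim (.inr z) (JBody JB JS z))))) :=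
    step_in_delim env _ _ (LTS.parTauR LTS.tellA)
  have step6 : TopRed CS env
      (Proc.delim (.inl n) (.par (.par (.con (con1 (.inl n)))
          (.par (.con (paidP (.inl n)))
            (.choice (.act .tau (.act (.tell (disputeP (.inl n))) .nil))
              (.act (.ask (sentP (.inl n))) .nil))))
        (.par (SELr NSn (.inl n)) (.delim (.inr z) (JBody JB JS z)))))
      (.delim (.inl n) (.par (.par (.con (con1 (.inl n)))
          (.par (.con (paidP (.inl n))) (.act (.tell (disputeP (.inl n))) .nil)))
        (.par (SELr NSn (.inl n)) (.delim (.inr z) (JBody JB JS z))))) :=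
    step_in_delim env _ _ (LTS.parTauR (LTS.parTauR (LTS.sumL LTS.tauA trivial hn_tau)))
  have step7 : TopRed CS env
      (Proc.delim (.inl n) (.par (.par (.con (con1 (.inl n)))
          (.par (.con (paidP (.inl n))) (.act (.tell (disputeP (.inl n))) .nil)))
        (.par (SELr NSn (.inl n)) (.delim (.inr z) (JBody JB JS z)))))
      (.delim (.inl n) (.par (BUYr (.inl n))
        (.par (SELr NSn (.inl n)) (.delim (.inr z) (JBody JB JS z))))) :=
    step_in_delim env _ _ (LTS.parTauR (LTS.parTauR LTS.tellA))
  -- step 8: the judge joins the session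
  have hNSnz : (Sum.inr z : Atom) ∉ NSn.atoms CS :=
    fuse_subst_fresh (fuse_prop x y n) hNSz (by simp)
  have step8' := step_join env NSn JB JS z n hNSnz
  rw [join_subst_eq NSn JB JS z n] at step8'
  set NS2 : Proc F := NSn.subst CS (singleSubst z n) with hNS2def
  set JB2 : Proc F := JB.subst CS (singleSubst z n) with hJB2def
  set JS2 : Proc F := JS.subst CS (singleSubst z n) with hJS2def
  -- step 9: the judge convicts the seller
  have step9 := step_check env NS2 JB2 JS2 n
  -- assemble the reduction sequence
  refine ⟨n, .par (BUYr (.inl n)) (.par (SELr NS2 (.inl n)) (JN1a JB2 (.inl n))),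
    .delim (.inl n) (.par (BUYr (.inl n)) (.par (SELr NS2 (.inl n))
      (.par (JN1a JB2 (.inl n)) JS2))), ?_, ?_⟩
  · exact .head step1 (.head step2 (.head step3' (.head step4 (.head step5
      (.head step6 (.head step7 (.head step8' (.single step9))))))))
  · -- structural rearrangement and alpha conversion at the end
    have hrot := par_rot env (BUYr (.inl n)) (SELr NS2 (.inl n)) (JN1a JB2 (.inl n)) JS2
    have halpha : AlphaEq CS JS2 (jailSeller.subst CS (singleSubst 2 n)) := by
      rw [hJS2def, hJSdef]
      exact ren_subst_alpha jailSeller 2 z n h2z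
        (hM z hMz jailSeller (by simp)).2
    exact StructEq.delimCong (StructEq.trans hrot
      (StructEq.parCong (StructEq.alpha halpha)
        (StructEq.refl (CS := CS) (env := env) _)))
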